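/- arXiv:1703.01955 — 7 statements merged into one kernel-verified Lean document; each statement's English description precedes it below -/
import Mathlib

section
/- Let m be any integer and let c_n denote the coefficient of x^n in T(x)^m (the m-th power of the unit T in ℤ[[x]], using the inverse when m < 0). Then c_0 = 1 and, for every n ≥ 1, n·c_n = m·Σ_{k=0}^{n-1} (1 - 2^{ν₂(n-k)+1})·c_k. -/
/-- The generating function `T(x) = ∑ (-1)^{s₂(n)} xⁿ = ∏ (1 - x^{2^j})`
of the Prouhet–Thue–Morse sequence. -/
noncomputable def T : PowerSeries ℤ :=
  PowerSeries.mk fun n => (-1) ^ (Nat.digits 2 n).sum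
lemma T_constantCoeff : PowerSeries.constantCoeff T = 1 := by
  rw [← PowerSeries.coeff_zero_eq_constantCoeff]
  simp [T]

/-- `T` as a unit of `ℤ⟦x⟧` (its constant coefficient is `1`). -/
noncomputable def TU : (PowerSeries ℤ)ˣ where
  val := T
  inv := PowerSeries.invOfUnit T 1
  val_inv := PowerSeries.mul_invOfUnit T 1 (by simpa using T_constantCoeff)
  inv_val := by
    rw [mul_comm]; exact PowerSeries.mul_invOfUnit T 1 (by simpa using T_constantCoeff)

/-- `c m n` is the coefficient of `xⁿ` in `T(x)^m`, for `m : ℤ`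
(using the inverse of the unit `T` when `m < 0`). -/
noncomputable def c (m : ℤ) (n : ℕ) : ℤ :=
  PowerSeries.coeff n ((TU ^ m : (PowerSeries ℤ)ˣ) : PowerSeries ℤ)

/-- PTM term. -/
def tm (n : ℕ) : ℤ := (-1) ^ (Nat.digits 2 n).sum

lemma tm_zero : tm 0 = 1 := by simp [tm]

lemma tm_two_mul (n : ℕ) : tm (2 * n) = tm n := by
  rcases Nat.eq_zero_or_pos n with h | h
  · simp [h]
  · have : Nat.digits 2 (2 * n) = 0 :: Nat.digits 2 n := by
      rw [Nat.digits_def' (by norm_num) (by omega)]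
      congr 1
      · omega
      · congr 1; omega
    simp [tm, this]

lemma tm_two_mul_add_one (n : ℕ) : tm (2 * n + 1) = - tm n := by
  have : Nat.digits 2 (2 * n + 1) = 1 :: Nat.digits 2 n := by
    rw [Nat.digits_def' (by norm_num) (by omega)]
    congr 1
    · omega
    · congr 1; omega
  unfold tm
  rw [this, List.sum_cons, pow_add, pow_one]
  ring

/-- the arithmetic factor. -/
def bc (d : ℕ) : ℤ := 1 - 2 ^ (padicValNat 2 d + 1)

lemma bc_odd (d : ℕ) (hd : Odd d) : bc d = -1 := by
  have : padicValNat 2 d = 0 := by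
    rcases hd with ⟨j, rfl⟩
    simp only [padicValNat.eq_zero_iff]
    right; right
    omega
  simp [bc, this]

lemma bc_two_mul (e : ℕ) (he : e ≠ 0) : bc (2 * e) = 2 * bc e - 1 := by
  haveI : Fact (Nat.Prime 2) := ⟨Nat.prime_two⟩
  have h : padicValNat 2 (2 * e) = padicValNat 2 e + 1 := by
    rw [padicValNat.mul (by norm_num) he, padicValNat_self]; ring
  simp only [bc, h]
  ring

lemma sum_range_two_mul (f : ℕ → ℤ) (n : ℕ) :
    ∑ k ∈ Finset.range (2 * n), f k = ∑ j ∈ Finset.range n, (f (2 * j) + f (2 * j + 1)) := by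
  induction n with
  | zero => simp
  | succ n ih =>
    rw [Finset.sum_range_succ, ← ih, Nat.mul_succ, Finset.sum_range_succ, Finset.sum_range_succ]
    ring_nf

lemma key : ∀ n : ℕ, ∑ k ∈ Finset.range n, bc (n - k) * tm k = n * tm n := by
  intro n
  induction n using Nat.strong_induction_on with
  | _ n ih =>
    rcases Nat.even_or_odd n with ⟨N, hN⟩ | ⟨N, hN⟩
    · -- n = N + N
      have hn : n = 2 * N := by omega
      subst hn
      rcases Nat.eq_zero_or_pos N with h0 | h0
      · simp [h0]
      · rw [sum_range_two_mul (fun k => bc (2 * N - k) * tm k) N]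
        have hterm : ∀ j ∈ Finset.range N,
            (fun k => bc (2 * N - k) * tm k) (2 * j) +
              (fun k => bc (2 * N - k) * tm k) (2 * j + 1) = 2 * (bc (N - j) * tm j) := by
          intro j hj
          rw [Finset.mem_range] at hj
          have h1 : 2 * N - 2 * j = 2 * (N - j) := by omega
          have h2 : 2 * N - (2 * j + 1) = 2 * (N - j - 1) + 1 := by omega
          simp only []
          rw [h1, h2, bc_odd (2 * (N - j - 1) + 1) ⟨N - j - 1, rfl⟩, bc_two_mul (N - j) (by omega),
            tm_two_mul, tm_two_mul_add_one]
          ring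
        rw [Finset.sum_congr rfl hterm, ← Finset.mul_sum, ih N (by omega), tm_two_mul]
        push_cast
        ring
    · -- n = 2 * N + 1
      subst hN
      rw [Finset.sum_range_succ, sum_range_two_mul (fun k => bc (2 * N + 1 - k) * tm k) N]
      have hterm : ∀ j ∈ Finset.range N,
          (fun k => bc (2 * N + 1 - k) * tm k) (2 * j) +
            (fun k => bc (2 * N + 1 - k) * tm k) (2 * j + 1) = -2 * (bc (N - j) * tm j) := by
        intro j hj
        rw [Finset.mem_range] at hj
        have h1' : 2 * N + 1 - 2 * j = 2 * (N - j) + 1 := by omega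
        have h2 : 2 * N + 1 - (2 * j + 1) = 2 * (N - j) := by omega
        simp only []
        rw [h1', h2, bc_odd (2 * (N - j) + 1) ⟨N - j, rfl⟩, bc_two_mul (N - j) (by omega),
          tm_two_mul_add_one, tm_two_mul]
        ring
      have hlast : bc (2 * N + 1 - 2 * N) * tm (2 * N) = - tm N := by
        have : 2 * N + 1 - 2 * N = 2 * 0 + 1 := by omega
        rw [this, bc_odd (2 * 0 + 1) ⟨0, rfl⟩, tm_two_mul]
        ring
      rw [Finset.sum_congr rfl hterm, ← Finset.mul_sum, ih N (by omega), hlast,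
        tm_two_mul_add_one]
      push_cast
      ring

noncomputable def B : PowerSeries ℤ :=
  PowerSeries.mk fun d => if d = 0 then 0 else bc d

lemma coeff_T (n : ℕ) : PowerSeries.coeff n T = tm n := by simp [T, tm]

/-- `X T' = B T`. -/
lemma base_eq : PowerSeries.X * PowerSeries.derivativeFun T = B * T := by
  ext n
  cases n with
  | zero => simp [B]
  | succ n =>
    rw [PowerSeries.coeff_succ_X_mul, (show ∀ f : PowerSeries ℤ, PowerSeries.derivativeFun f = PowerSeries.derivative ℤ f from fun _ => rfl), PowerSeries.coeff_derivative, coeff_T,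
      mul_comm B T, PowerSeries.coeff_mul,
      Finset.Nat.sum_antidiagonal_eq_sum_range_succ_mk, Finset.sum_range_succ]
    have hlast : PowerSeries.coeff (n + 1 - (n + 1)) B = 0 := by simp [B]
    rw [hlast, mul_zero, add_zero]
    have hcongr : ∀ k ∈ Finset.range (n + 1),
        PowerSeries.coeff k T * PowerSeries.coeff (n + 1 - k) B
          = bc (n + 1 - k) * tm k := by
      intro k hk
      rw [Finset.mem_range] at hk
      rw [coeff_T]
      have : PowerSeries.coeff (n + 1 - k) B = bc (n + 1 - k) := by
        simp only [B, PowerSeries.coeff_mk, if_neg (by omega : ¬ n + 1 - k = 0)]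
      rw [this]; ring
    rw [Finset.sum_congr rfl hcongr, key (n + 1)]
    push_cast
    ring

lemma inv_eq : PowerSeries.X * PowerSeries.derivativeFun ((TU⁻¹ : (PowerSeries ℤ)ˣ) : PowerSeries ℤ)
    = -(B * ((TU⁻¹ : (PowerSeries ℤ)ˣ) : PowerSeries ℤ)) := by
  set I : PowerSeries ℤ := ((TU⁻¹ : (PowerSeries ℤ)ˣ) : PowerSeries ℤ) with hI
  have h1 : T * I = 1 := by
    rw [hI]
    exact_mod_cast TU.mul_inv
  have h2 : PowerSeries.derivativeFun (T * I) = 0 := by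
    rw [h1, PowerSeries.derivativeFun_one]
  rw [PowerSeries.derivativeFun_mul, smul_eq_mul, smul_eq_mul] at h2
  have h3 : T * (PowerSeries.X * PowerSeries.derivativeFun I + B * I) = 0 := by
    have := congrArg (fun z => PowerSeries.X * z) h2
    simp only [mul_zero, mul_add] at this
    calc T * (PowerSeries.X * PowerSeries.derivativeFun I + B * I)
        = PowerSeries.X * (T * PowerSeries.derivativeFun I)
            + (PowerSeries.X * PowerSeries.derivativeFun T) * I := by
          rw [base_eq]; ring
      _ = 0 := by linear_combination this
  have hT : T ≠ 0 := by
    intro h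
    have := T_constantCoeff
    rw [h, map_zero] at this
    exact absurd this (by norm_num)
  rcases mul_eq_zero.mp h3 with h | h
  · exact absurd h hT
  · linear_combination h

lemma logderiv (m : ℤ) :
    PowerSeries.X * PowerSeries.derivativeFun ((TU ^ m : (PowerSeries ℤ)ˣ) : PowerSeries ℤ)
      = PowerSeries.C m * (B * ((TU ^ m : (PowerSeries ℤ)ˣ) : PowerSeries ℤ)) := by
  induction m using Int.induction_on with
  | zero => simp [PowerSeries.derivativeFun_one]
  | succ m hm =>
    have hv : ((TU ^ ((m : ℤ) + 1) : (PowerSeries ℤ)ˣ) : PowerSeries ℤ)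
        = ((TU ^ (m : ℤ) : (PowerSeries ℤ)ˣ) : PowerSeries ℤ) * T := by
      rw [zpow_add_one, Units.val_mul]; rfl
    rw [hv, PowerSeries.derivativeFun_mul, smul_eq_mul, smul_eq_mul, map_add, map_one]
    linear_combination ((TU ^ (m : ℤ) : (PowerSeries ℤ)ˣ) : PowerSeries ℤ) * base_eq + T * hm
  | pred m hm =>
    have hv : ((TU ^ (-(m : ℤ) - 1) : (PowerSeries ℤ)ˣ) : PowerSeries ℤ)
        = ((TU ^ (-(m : ℤ)) : (PowerSeries ℤ)ˣ) : PowerSeries ℤ)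
            * ((TU⁻¹ : (PowerSeries ℤ)ˣ) : PowerSeries ℤ) := by
      rw [zpow_sub_one, Units.val_mul]
    rw [hv, PowerSeries.derivativeFun_mul, smul_eq_mul, smul_eq_mul, map_sub, map_one]
    linear_combination ((TU ^ (-(m : ℤ)) : (PowerSeries ℤ)ˣ) : PowerSeries ℤ) * inv_eq
      + ((TU⁻¹ : (PowerSeries ℤ)ˣ) : PowerSeries ℤ) * hm

lemma c_zero (m : ℤ) : c m 0 = 1 := by
  have h : Units.map (PowerSeries.constantCoeff : PowerSeries ℤ →+* ℤ).toMonoidHom TU = 1 :=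
    Units.ext T_constantCoeff
  have h2 : PowerSeries.constantCoeff ((TU ^ m : (PowerSeries ℤ)ˣ) : PowerSeries ℤ)
      = ((Units.map (PowerSeries.constantCoeff : PowerSeries ℤ →+* ℤ).toMonoidHom
          (TU ^ m) : ℤˣ) : ℤ) := rfl
  rw [c, PowerSeries.coeff_zero_eq_constantCoeff, h2, map_zpow, h, one_zpow, Units.val_one]

theorem stmt0 (m : ℤ) :
    c m 0 = 1 ∧
      ∀ n : ℕ, 1 ≤ n →
        (n : ℤ) * c m n =
          m * ∑ k ∈ Finset.range n,
            (1 - 2 ^ (padicValNat 2 (n - k) + 1)) * c m k := by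
  refine ⟨c_zero m, fun n hn => ?_⟩
  obtain ⟨n', rfl⟩ : ∃ n', n = n' + 1 := ⟨n - 1, by omega⟩
  have h := congrArg (PowerSeries.coeff (n' + 1)) (logderiv m)
  set F : PowerSeries ℤ := ((TU ^ m : (PowerSeries ℤ)ˣ) : PowerSeries ℤ) with hF
  rw [PowerSeries.coeff_succ_X_mul, (show ∀ f : PowerSeries ℤ, PowerSeries.derivativeFun f = PowerSeries.derivative ℤ f from fun _ => rfl), PowerSeries.coeff_derivative,
    PowerSeries.coeff_C_mul, mul_comm B F, PowerSeries.coeff_mul,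
    Finset.Nat.sum_antidiagonal_eq_sum_range_succ_mk, Finset.sum_range_succ] at h
  have hlast : PowerSeries.coeff (n' + 1 - (n' + 1)) B = 0 := by simp [B]
  rw [hlast, mul_zero, add_zero] at h
  have hcongr : ∀ k ∈ Finset.range (n' + 1),
      PowerSeries.coeff k F * PowerSeries.coeff (n' + 1 - k) B
        = (1 - 2 ^ (padicValNat 2 (n' + 1 - k) + 1)) * c m k := by
    intro k hk
    rw [Finset.mem_range] at hk
    have hB : PowerSeries.coeff (n' + 1 - k) B = bc (n' + 1 - k) := by
      simp only [B, PowerSeries.coeff_mk, if_neg (by omega : ¬ n' + 1 - k = 0)]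
    rw [hB, bc, c]
    ring
  rw [Finset.sum_congr rfl hcongr] at h
  rw [show c m (n' + 1) = PowerSeries.coeff (n' + 1) F from rfl]
  push_cast at h ⊢
  linarith [h]
end

section
/- For every prime p and every n ∈ ℕ, the polynomial congruence g_n(t) ≡ g_{n mod p}(t)·(t - t^p)^{⌊n/p⌋} holds modulo p, i.e. the images of the two sides in (ℤ/pℤ)[t] are equal. -/
open Finset

/-- The polynomials `g_n ∈ ℤ[t]`: `g_0 = 1` and, for `n ≥ 1`,
`g_n(t) = t · ∑_{k=0}^{n-1} (1 - 2^{ν₂(n-k)+1}) · ((n-1)!/k!) · g_k(t)`. -/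
noncomputable def g : ℕ → Polynomial ℤ
  | 0 => 1
  | n + 1 =>
      Polynomial.X *
        ∑ k ∈ (Finset.range (n + 1)).attach,
          Polynomial.C
              ((1 - 2 ^ (padicValNat 2 (n + 1 - k.1) + 1)) *
                ((n.factorial / k.1.factorial : ℕ) : ℤ)) *
            g k.1
  decreasing_by exact Finset.mem_range.mp k.2


namespace GAux
open PowerSeries

/-- `A n = (-1)^(number of ones in binary expansion of n)`. -/
def A : ℕ → ℤ
  | 0 => 1
  | n + 1 => (if (n + 1) % 2 = 1 then -1 else 1) * A ((n + 1) / 2)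
  decreasing_by exact Nat.div_lt_self (Nat.succ_pos n) one_lt_two

lemma A_zero : A 0 = 1 := by rw [A]

lemma A_succ (n : ℕ) : A (n + 1) = (if (n + 1) % 2 = 1 then -1 else 1) * A ((n + 1) / 2) := by
  rw [A]

lemma A_two_mul (k : ℕ) (hk : k ≠ 0) : A (2 * k) = A k := by
  obtain ⟨m, rfl⟩ := Nat.exists_eq_succ_of_ne_zero hk
  have h2 : 2 * (m + 1) = (2 * m + 1) + 1 := by ring
  rw [h2, A_succ]
  have h3 : ((2 * m + 1) + 1) % 2 = 0 := by omega
  have h4 : ((2 * m + 1) + 1) / 2 = m + 1 := by omega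
  rw [h3, h4]
  norm_num

lemma A_two_mul_add_one (k : ℕ) : A (2 * k + 1) = -A k := by
  rw [A_succ]
  have h1 : (2 * k + 1) % 2 = 1 := by omega
  have h2 : (2 * k + 1) / 2 = k := by omega
  rw [h1, h2]; simp

lemma A_one : A 1 = -1 := by
  have := A_two_mul_add_one 0; simpa [A_zero] using this

/-- `c m = 1 - 2^(ν₂(m)+1)`. -/
def c (m : ℕ) : ℤ := 1 - 2 ^ (padicValNat 2 m + 1)

lemma c_one : c 1 = -1 := by simp [c, padicValNat.one]

lemma c_odd (k : ℕ) : c (2 * k + 1) = -1 := by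
  have h : ¬ (2 ∣ (2 * k + 1)) := by omega
  have : padicValNat 2 (2 * k + 1) = 0 := padicValNat.eq_zero_of_not_dvd h
  simp [c, this]

lemma c_two_mul (k : ℕ) (hk : k ≠ 0) : c (2 * k) = 2 * c k - 1 := by
  have : padicValNat 2 (2 * k) = 1 + padicValNat 2 k := by
    rw [padicValNat.mul (by norm_num) hk]
    simp [padicValNat.self]
  rw [c, this, c]
  ring

/-- `S n = ∑_{m=1}^{n} c m * A (n - m)`. -/
def S (n : ℕ) : ℤ := ∑ m ∈ range n, c (m + 1) * A (n - (m + 1))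

lemma sum_range_two_mul {M : Type*} [AddCommMonoid M] (h : ℕ → M) (N : ℕ) :
    ∑ m ∈ range (2 * N), h m = ∑ i ∈ range N, (h (2 * i) + h (2 * i + 1)) := by
  induction N with
  | zero => simp
  | succ N ih =>
      have h2 : 2 * (N + 1) = (2 * N + 1) + 1 := by ring
      rw [h2, Finset.sum_range_succ, Finset.sum_range_succ, ih, Finset.sum_range_succ]
      abel

lemma sum_A_reflect (N : ℕ) :
    ∑ i ∈ range N, A (N - (i + 1)) = ∑ i ∈ range N, A i := by
  rw [← Finset.sum_range_reflect (fun j => A j) N]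
  apply Finset.sum_congr rfl
  intro i hi
  congr 1
  omega

lemma sum_A_reflect' (N : ℕ) :
    ∑ i ∈ range N, A (N - i) = (∑ i ∈ range N, A i) + A N - A 0 := by
  have h1 : ∑ i ∈ range N, A (N - i) = ∑ i ∈ range N, A (i + 1) := by
    rw [← Finset.sum_range_reflect (fun j => A (j + 1)) N]
    apply Finset.sum_congr rfl
    intro i hi
    have hi' : i < N := mem_range.mp hi
    congr 1
    omega
  rw [h1]
  have h2 := Finset.sum_range_succ' (fun i => A i) N
  -- h2 : ∑ i ∈ range (N+1), A i = (∑ i ∈ range N, A (i+1)) + A 0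
  have h3 := Finset.sum_range_succ (fun i => A i) N
  -- h3 : ∑ i ∈ range (N+1), A i = ∑ i ∈ range N, A i + A N
  omega

lemma key_identity : ∀ n : ℕ, S n = n * A n := by
  intro n
  induction n using Nat.strong_induction_on with
  | _ n ih =>
    match n with
    | 0 => simp [S]
    | 1 => simp [S, c_one, A_one, A_zero]
    | (n + 2) =>
      rcases Nat.even_or_odd (n + 2) with ⟨N, hN⟩ | ⟨N, hN⟩
      · -- n + 2 = 2 * N, N ≥ 1
        have hN1 : 1 ≤ N := by omega
        have hNlt : N < n + 2 := by omega
        have h2N : n + 2 = 2 * N := by omega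
        rw [h2N, S, sum_range_two_mul]
        have hterm : ∀ i ∈ range N,
            (c (2 * i + 1) * A (2 * N - (2 * i + 1)) +
              c (2 * i + 1 + 1) * A (2 * N - (2 * i + 1 + 1)))
            = 2 * (c (i + 1) * A (N - (i + 1))) := by
          intro i hi
          have hiN : i < N := mem_range.mp hi
          have e1 : 2 * N - (2 * i + 1) = 2 * (N - i - 1) + 1 := by omega
          have e2 : 2 * N - (2 * i + 1 + 1) = 2 * (N - i - 1) := by omega
          have e3 : 2 * i + 1 + 1 = 2 * (i + 1) := by ring
          rw [e1, e2, e3, c_odd, A_two_mul_add_one, c_two_mul (i + 1) (by omega)]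
          rcases Nat.eq_zero_or_pos (N - i - 1) with h | h
          · have h' : N - (i + 1) = 0 := by omega
            rw [h, h']; ring
          · rw [A_two_mul (N - i - 1) (by omega)]
            have h' : N - (i + 1) = N - i - 1 := by omega
            rw [h']; ring
        rw [Finset.sum_congr rfl hterm, ← Finset.mul_sum]
        have hS := ih N hNlt
        rw [S] at hS
        rw [hS, A_two_mul N (by omega)]
        push_cast
        ring
      · -- n + 2 = 2 * N + 1, N ≥ 1
        have hN1 : 1 ≤ N := by omega
        have hNlt : N < n + 2 := by omega
        have h2N : n + 2 = 2 * N + 1 := by omega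
        rw [h2N, S, Finset.sum_range_succ, sum_range_two_mul]
        have hterm : ∀ i ∈ range N,
            (c (2 * i + 1) * A (2 * N + 1 - (2 * i + 1)) +
              c (2 * i + 1 + 1) * A (2 * N + 1 - (2 * i + 1 + 1)))
            = -A (N - i) + (-(2 * (c (i + 1) * A (N - (i + 1)))) + A (N - (i + 1))) := by
          intro i hi
          have hiN : i < N := mem_range.mp hi
          have e1 : 2 * N + 1 - (2 * i + 1) = 2 * (N - i) := by omega
          have e2 : 2 * N + 1 - (2 * i + 1 + 1) = 2 * (N - i - 1) + 1 := by omega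
          have e3 : 2 * i + 1 + 1 = 2 * (i + 1) := by ring
          rw [e1, e2, e3, c_odd, A_two_mul (N - i) (by omega), A_two_mul_add_one,
            c_two_mul (i + 1) (by omega)]
          have h' : N - (i + 1) = N - i - 1 := by omega
          rw [h']; ring
        rw [Finset.sum_congr rfl hterm]
        rw [Finset.sum_add_distrib, Finset.sum_add_distrib]
        have hS := ih N hNlt
        rw [S] at hS
        have hA1 : ∑ i ∈ range N, -A (N - i) = -((∑ i ∈ range N, A i) + A N - A 0) := by
          rw [Finset.sum_neg_distrib, sum_A_reflect']
        have hA2 : ∑ i ∈ range N, -(2 * (c (i + 1) * A (N - (i + 1))))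
            = -(2 * S N) := by
          rw [Finset.sum_neg_distrib, ← Finset.mul_sum, S]
        rw [hA1, hA2, sum_A_reflect, S, hS, Nat.sub_self, A_zero, c_odd, A_two_mul_add_one]
        push_cast
        ring
open PowerSeries in
noncomputable def F : PowerSeries ℤ := PowerSeries.mk A

noncomputable def D : PowerSeries ℤ := PowerSeries.mk (fun m => if m = 0 then 0 else c m)

lemma coeff_D_mul (φ : ℤ⟦X⟧) (n : ℕ) :
    PowerSeries.coeff n (D * φ) = ∑ m ∈ range n, c (m + 1) * PowerSeries.coeff (n - (m + 1)) φ := by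
  rw [PowerSeries.coeff_mul, Finset.Nat.sum_antidiagonal_eq_sum_range_succ_mk,
    Finset.sum_range_succ']
  simp only [D, coeff_mk]
  simp

lemma X_mul_derivative_F : (X : ℤ⟦X⟧) * (d⁄dX ℤ F) = D * F := by
  ext n
  match n with
  | 0 =>
      rw [coeff_D_mul]
      simp [PowerSeries.coeff_zero_eq_constantCoeff]
  | n + 1 =>
      rw [PowerSeries.coeff_succ_X_mul, PowerSeries.coeff_derivative, coeff_D_mul]
      have : ∑ m ∈ range (n + 1), c (m + 1) * PowerSeries.coeff (n + 1 - (m + 1)) F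
          = S (n + 1) := by
        apply Finset.sum_congr rfl
        intro m hm
        simp [F, coeff_mk]
      rw [this, key_identity]
      simp [F, coeff_mk]
      ring

/-- `e n k = [x^n] (F-1)^k`. -/
noncomputable def e (n k : ℕ) : ℤ := PowerSeries.coeff n ((F - 1) ^ k)

lemma constantCoeff_F_sub_one : PowerSeries.constantCoeff (F - 1) = 0 := by
  simp [F, ← PowerSeries.coeff_zero_eq_constantCoeff, coeff_mk, A_zero]

lemma e_eq_zero_of_lt {n k : ℕ} (h : n < k) : e n k = 0 := by
  have hdvd : (X : ℤ⟦X⟧) ^ k ∣ (F - 1) ^ k :=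
    pow_dvd_pow_of_dvd (PowerSeries.X_dvd_iff.mpr constantCoeff_F_sub_one) k
  exact PowerSeries.X_pow_dvd_iff.mp hdvd n h

lemma e_zero_zero : e 0 0 = 1 := by simp [e]

lemma e_self_zero (n : ℕ) (hn : n ≠ 0) : e n 0 = 0 := by
  simp [e, PowerSeries.coeff_one, hn]

/-- `T n j = ∑_{m=1}^{n} c m * e (n-m) j`. -/
noncomputable def T (n j : ℕ) : ℤ := ∑ m ∈ range n, c (m + 1) * e (n - (m + 1)) j

lemma derivative_identity (n k : ℕ) :
    (n : ℤ) * e n k = k * (T n k + T n (k - 1)) := by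
  match k with
  | 0 => match n with
    | 0 => simp
    | n + 1 => simp [e_self_zero (n+1) (Nat.succ_ne_zero n)]
  | k + 1 =>
    have hps : (X : ℤ⟦X⟧) * (d⁄dX ℤ ((F - 1) ^ (k + 1)))
        = (k + 1 : ℤ⟦X⟧) * (D * ((F - 1) ^ (k + 1) + (F - 1) ^ k)) := by
      rw [Derivation.leibniz_pow]
      have hd : d⁄dX ℤ (F - 1) = d⁄dX ℤ F := by
        rw [map_sub]; simp
      rw [hd]
      have h1 : (X : ℤ⟦X⟧) * ((k + 1) • (F - 1) ^ (k + 1 - 1) • d⁄dX ℤ F)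
          = (k + 1 : ℤ⟦X⟧) * ((F - 1) ^ k * ((X : ℤ⟦X⟧) * d⁄dX ℤ F)) := by
        simp only [smul_eq_mul, Nat.add_sub_cancel, nsmul_eq_mul]
        push_cast
        ring
      rw [h1, X_mul_derivative_F]
      have h2 : (F - 1) ^ k * (D * F) = D * ((F - 1) ^ (k + 1) + (F - 1) ^ k) := by
        set G := F - 1 with hG
        have hF : F = G + 1 := by rw [hG]; ring
        rw [hF]; ring
      rw [h2]
    match n with
    | 0 => simp [T]
    | n + 1 =>
      have := congrArg (PowerSeries.coeff (n + 1)) hps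
      rw [PowerSeries.coeff_succ_X_mul, PowerSeries.coeff_derivative] at this
      have hcast : ((k : ℤ⟦X⟧) + 1) = PowerSeries.C ((k : ℤ) + 1) := by
        rw [map_add, map_one, map_natCast]
      rw [hcast, PowerSeries.coeff_C_mul, coeff_D_mul] at this
      have hsum : ∑ m ∈ range (n + 1),
          c (m + 1) * PowerSeries.coeff (n + 1 - (m + 1)) ((F - 1) ^ (k + 1) + (F - 1) ^ k)
          = T (n + 1) (k + 1) + T (n + 1) k := by
        rw [T, T, ← Finset.sum_add_distrib]
        apply Finset.sum_congr rfl
        intro m hm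
        simp only [map_add, e]
        ring
      rw [hsum] at this
      have : (↑(n + 1) : ℤ) * e (n + 1) (k + 1) = (↑k + 1) * (T (n + 1) (k + 1) + T (n + 1) k) := by
        rw [e]
        push_cast
        rw [mul_comm] at this
        push_cast at this
        linarith [this]
      rw [this]
      push_cast
      ring


noncomputable def ff (k : ℕ) : Polynomial ℤ :=
  ∏ i ∈ Finset.range k, (Polynomial.X - Polynomial.C (i : ℤ))

lemma ff_succ (k : ℕ) : ff (k + 1) = ff k * (Polynomial.X - Polynomial.C (k : ℤ)) :=
  Finset.prod_range_succ _ _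

lemma X_mul_ff (k : ℕ) :
    Polynomial.X * ff k = ff (k + 1) + Polynomial.C (k : ℤ) * ff k := by
  rw [ff_succ]; ring

lemma fact_div_mul {j k n : ℕ} (hjk : j ≤ k) (hkn : k ≤ n) :
    (n.factorial / k.factorial) * (k.factorial / j.factorial) = n.factorial / j.factorial := by
  rw [Nat.div_mul_div_comm (Nat.factorial_dvd_factorial hkn) (Nat.factorial_dvd_factorial hjk),
    mul_comm n.factorial k.factorial, Nat.mul_div_mul_left _ _ k.factorial_pos]

lemma fact_mul_succ {j n : ℕ} (h : j ≤ n) :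
    (n.factorial / j.factorial) * (n + 1) = (n + 1).factorial / j.factorial := by
  rw [Nat.factorial_succ, Nat.mul_div_assoc (n + 1) (Nat.factorial_dvd_factorial h)]
  ring

lemma fact_step {j n : ℕ} (h : j ≤ n) :
    ((n + 1).factorial / (j + 1).factorial) * (j + 1) = (n + 1).factorial / j.factorial := by
  have hd : (j + 1) ∣ (n + 1).factorial / j.factorial := by
    rw [Nat.dvd_div_iff_mul_dvd (Nat.factorial_dvd_factorial (by omega))]
    have h1 : j.factorial * (j + 1) = (j + 1).factorial := by
      rw [Nat.factorial_succ]; ring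
    rw [h1]
    exact Nat.factorial_dvd_factorial (by omega)
  have h2 : (n + 1).factorial / (j + 1).factorial = (n + 1).factorial / j.factorial / (j + 1) := by
    rw [Nat.div_div_eq_div_mul]
    congr 1
    rw [Nat.factorial_succ]; ring
  rw [h2, Nat.div_mul_cancel hd]

lemma T_eq_zero {n j : ℕ} (h : n ≤ j) : T n j = 0 := by
  apply Finset.sum_eq_zero
  intro m hm
  have hm' : m < n := Finset.mem_range.mp hm
  have : n - (m + 1) < j := by omega
  rw [e_eq_zero_of_lt this, mul_zero]

lemma key_coeff {n i : ℕ} (h : i ≤ n) :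
    ((n.factorial / i.factorial : ℕ) : ℤ) * T (n + 1) i
      + ((i : ℤ) + 1) * (((n.factorial / (i + 1).factorial : ℕ) : ℤ) * T (n + 1) (i + 1))
    = (((n + 1).factorial / (i + 1).factorial : ℕ) : ℤ) * e (n + 1) (i + 1) := by
  have DI := derivative_identity (n + 1) (i + 1)
  simp only [Nat.add_sub_cancel] at DI
  push_cast at DI
  rcases eq_or_lt_of_le h with rfl | hlt
  · have hT : T (i + 1) (i + 1) = 0 := T_eq_zero le_rfl
    have h1 : (i.factorial / i.factorial : ℕ) = 1 := Nat.div_self i.factorial_pos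
    have h2 : ((i + 1).factorial / (i + 1).factorial : ℕ) = 1 :=
      Nat.div_self (i + 1).factorial_pos
    rw [hT] at DI
    rw [hT, h1, h2]
    have hne : ((i : ℤ) + 1) ≠ 0 := by positivity
    have hzz := mul_left_cancel₀ hne DI
    push_cast
    linarith [hzz]
  · have hin : i + 1 ≤ n := hlt
    have e1 : (n.factorial / i.factorial) * (n + 1)
        = ((n + 1).factorial / (i + 1).factorial) * (i + 1) := by
      rw [fact_mul_succ h, ← fact_step h]
    have e2 := fact_mul_succ hin
    have c1 : ((n.factorial / i.factorial : ℕ) : ℤ) * ((n : ℤ) + 1)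
        = (((n + 1).factorial / (i + 1).factorial : ℕ) : ℤ) * ((i : ℤ) + 1) := by
      exact_mod_cast e1
    have c2 : ((n.factorial / (i + 1).factorial : ℕ) : ℤ) * ((n : ℤ) + 1)
        = (((n + 1).factorial / (i + 1).factorial : ℕ) : ℤ) := by
      exact_mod_cast e2
    have hne : ((n : ℤ) + 1) ≠ 0 := by positivity
    apply mul_left_cancel₀ hne
    linear_combination T (n + 1) i * c1 + ((i : ℤ) + 1) * T (n + 1) (i + 1) * c2
      - (((n + 1).factorial / (i + 1).factorial : ℕ) : ℤ) * DI

noncomputable def G (n : ℕ) : Polynomial ℤ :=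
  ∑ k ∈ Finset.range (n + 1), Polynomial.C (((n.factorial / k.factorial : ℕ) : ℤ) * e n k) * ff k

theorem g_eq_G : ∀ n, g n = G n := by
  intro n
  induction n using Nat.strong_induction_on with
  | _ n ih =>
    match n with
    | 0 =>
        rw [g, G]
        simp [e_zero_zero, ff]
    | (n + 1) =>
      rw [g, Finset.sum_attach (Finset.range (n + 1)) (fun k => Polynomial.C
              ((1 - 2 ^ (padicValNat 2 (n + 1 - k) + 1)) *
                ((n.factorial / k.factorial : ℕ) : ℤ)) * g k)]
      have hsum1 : ∑ k ∈ Finset.range (n + 1), Polynomial.C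
              ((1 - 2 ^ (padicValNat 2 (n + 1 - k) + 1)) *
                ((n.factorial / k.factorial : ℕ) : ℤ)) * g k
          = ∑ k ∈ Finset.range (n + 1), ∑ j ∈ Finset.range (n + 1),
              Polynomial.C (c (n + 1 - k) * (((n.factorial / j.factorial : ℕ) : ℤ) * e k j)) * ff j := by
        apply Finset.sum_congr rfl
        intro k hk
        have hkn : k ≤ n := Nat.lt_succ_iff.mp (Finset.mem_range.mp hk)
        rw [ih k (by omega), G, Finset.mul_sum]
        have hterm : ∀ j ∈ Finset.range (k + 1),
            Polynomial.C ((1 - 2 ^ (padicValNat 2 (n + 1 - k) + 1)) *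
                ((n.factorial / k.factorial : ℕ) : ℤ)) *
              (Polynomial.C (((k.factorial / j.factorial : ℕ) : ℤ) * e k j) * ff j)
            = Polynomial.C (c (n + 1 - k) * (((n.factorial / j.factorial : ℕ) : ℤ) * e k j)) * ff j := by
          intro j hj
          have hjk : j ≤ k := Nat.lt_succ_iff.mp (Finset.mem_range.mp hj)
          rw [← mul_assoc, ← Polynomial.C_mul]
          congr 1
          have hf := fact_div_mul hjk hkn
          rw [← hf]
          simp only [c]
          push_cast
          ring
        rw [Finset.sum_congr rfl hterm]
        apply Finset.sum_subset (Finset.range_subset_range.mpr (by omega : k + 1 ≤ n + 1))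
        intro j hj hj'
        have hkj : k < j := by
          simp only [Finset.mem_range] at hj hj'
          omega
        rw [e_eq_zero_of_lt hkj]
        simp
      rw [hsum1, Finset.sum_comm]
      have hsum2 : ∀ j ∈ Finset.range (n + 1),
          ∑ k ∈ Finset.range (n + 1),
              Polynomial.C (c (n + 1 - k) * (((n.factorial / j.factorial : ℕ) : ℤ) * e k j)) * ff j
          = Polynomial.C (((n.factorial / j.factorial : ℕ) : ℤ) * T (n + 1) j) * ff j := by
        intro j hj
        rw [← Finset.sum_mul]
        congr 1
        rw [← map_sum]
        congr 1
        rw [← Finset.sum_range_reflect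
          (fun k => c (n + 1 - k) * (((n.factorial / j.factorial : ℕ) : ℤ) * e k j)) (n + 1)]
        rw [T, Finset.mul_sum]
        apply Finset.sum_congr rfl
        intro m hm
        have hm' : m < n + 1 := Finset.mem_range.mp hm
        have e1 : n + 1 - 1 - m = n - m := by omega
        have e2 : n + 1 - (n - m) = m + 1 := by omega
        have e3 : n + 1 - (m + 1) = n - m := by omega
        rw [e1, e2, e3]
        ring
      rw [Finset.sum_congr rfl hsum2, Finset.mul_sum]
      have hsum3 : ∀ j ∈ Finset.range (n + 1),
          Polynomial.X * (Polynomial.C (((n.factorial / j.factorial : ℕ) : ℤ) * T (n + 1) j) * ff j)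
          = Polynomial.C (((n.factorial / j.factorial : ℕ) : ℤ) * T (n + 1) j) * ff (j + 1)
            + Polynomial.C ((j : ℤ) * (((n.factorial / j.factorial : ℕ) : ℤ) * T (n + 1) j)) * ff j := by
        intro j hj
        have := X_mul_ff j
        calc Polynomial.X * (Polynomial.C (((n.factorial / j.factorial : ℕ) : ℤ) * T (n + 1) j) * ff j)
            = Polynomial.C (((n.factorial / j.factorial : ℕ) : ℤ) * T (n + 1) j) *
                (Polynomial.X * ff j) := by ring
          _ = _ := by
              rw [this]
              simp only [Polynomial.C_mul]
              ring
      rw [Finset.sum_congr rfl hsum3, Finset.sum_add_distrib]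
      -- second sum: peel j = 0 and shift
      have hB : ∑ j ∈ Finset.range (n + 1),
            Polynomial.C ((j : ℤ) * (((n.factorial / j.factorial : ℕ) : ℤ) * T (n + 1) j)) * ff j
          = ∑ i ∈ Finset.range (n + 1),
            Polynomial.C (((i : ℤ) + 1) * (((n.factorial / (i + 1).factorial : ℕ) : ℤ) * T (n + 1) (i + 1))) * ff (i + 1) := by
        rw [Finset.sum_range_succ' (fun j =>
          Polynomial.C ((j : ℤ) * (((n.factorial / j.factorial : ℕ) : ℤ) * T (n + 1) j)) * ff j) n]
        rw [Finset.sum_range_succ (fun i =>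
          Polynomial.C (((i : ℤ) + 1) * (((n.factorial / (i + 1).factorial : ℕ) : ℤ) * T (n + 1) (i + 1))) * ff (i + 1))]
        have hlast : T (n + 1) (n + 1) = 0 := T_eq_zero le_rfl
        rw [hlast]
        simp only [Nat.cast_zero, zero_mul, map_zero, zero_mul, add_zero, mul_zero]
        apply Finset.sum_congr rfl
        intro i hi
        push_cast
        ring_nf
      rw [hB, ← Finset.sum_add_distrib]
      -- target side
      rw [G, Finset.sum_range_succ' (fun k =>
        Polynomial.C ((((n + 1).factorial / k.factorial : ℕ) : ℤ) * e (n + 1) k) * ff k) (n + 1)]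
      rw [e_self_zero (n + 1) (Nat.succ_ne_zero n)]
      simp only [mul_zero, map_zero, zero_mul, add_zero]
      apply Finset.sum_congr rfl
      intro i hi
      have hin : i ≤ n := Nat.lt_succ_iff.mp (Finset.mem_range.mp hi)
      rw [← add_mul, ← Polynomial.C_add, key_coeff hin]

section ModP

variable {p : ℕ} [hp : Fact p.Prime]

lemma factorial_div_eq_prod_Ioc {k n : ℕ} (h : k ≤ n) :
    n.factorial / k.factorial = ∏ i ∈ Finset.Ioc k n, i := by
  induction n, h using Nat.le_induction with
  | base => simp [Nat.div_self k.factorial_pos]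
  | succ n hn ihn =>
      rw [Finset.prod_Ioc_succ_top (by omega), ← ihn, ← fact_mul_succ hn]

lemma fact_ratio_zero {k n : ℕ} (hkn : k ≤ n) (hq : k / p < n / p) :
    ((n.factorial / k.factorial : ℕ) : ZMod p) = 0 := by
  rw [factorial_div_eq_prod_Ioc hkn, Nat.cast_prod]
  have hmem : (k / p + 1) * p ∈ Finset.Ioc k n := by
    rw [Finset.mem_Ioc]
    constructor
    · have h1 := Nat.div_add_mod k p
      have h2 := Nat.mod_lt k hp.out.pos
      have h3 : (k / p + 1) * p = p * (k / p) + p := by ring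
      omega
    · calc (k / p + 1) * p ≤ (n / p) * p := Nat.mul_le_mul_right p (by omega)
        _ ≤ n := Nat.div_mul_le_self n p
  apply Finset.prod_eq_zero hmem
  rw [ZMod.natCast_eq_zero_iff]
  exact dvd_mul_left p (k / p + 1)

lemma fact_ratio_congr {q b r : ℕ} (hb : b ≤ r) :
    (((q * p + r).factorial / (q * p + b).factorial : ℕ) : ZMod p)
      = ((r.factorial / b.factorial : ℕ) : ZMod p) := by
  rw [factorial_div_eq_prod_Ioc (by omega), factorial_div_eq_prod_Ioc hb,
    Nat.cast_prod, Nat.cast_prod]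
  apply Finset.prod_nbij' (fun i => i - q * p) (fun i => i + q * p)
  · intro a ha
    rw [Finset.mem_Ioc] at ha ⊢
    omega
  · intro a ha
    rw [Finset.mem_Ioc] at ha ⊢
    omega
  · intro a ha
    rw [Finset.mem_Ioc] at ha
    omega
  · intro a ha
    rw [Finset.mem_Ioc] at ha
    omega
  · intro a ha
    rw [Finset.mem_Ioc] at ha
    have h1 : (a - q * p) + q * p = a := by omega
    calc ((a : ℕ) : ZMod p) = (((a - q * p) + q * p : ℕ) : ZMod p) := by rw [h1]
      _ = ((a - q * p : ℕ) : ZMod p) := by push_cast [ZMod.natCast_self]; ring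

-- power series mod p lemmas
lemma coeff_pow_lt' {R : Type*} [CommRing R] {φ : PowerSeries R} {s : ℕ}
    (h : ∀ m, m < s → PowerSeries.coeff m φ = 0) {q m : ℕ} (hm : m < q * s) :
    PowerSeries.coeff m (φ ^ q) = 0 := by
  have h1 : (PowerSeries.X : PowerSeries R) ^ s ∣ φ := by
    rw [PowerSeries.X_pow_dvd_iff]; exact h
  have h2 : ((PowerSeries.X : PowerSeries R) ^ s) ^ q ∣ φ ^ q := pow_dvd_pow_of_dvd h1 q
  rw [← pow_mul] at h2
  exact PowerSeries.X_pow_dvd_iff.mp h2 m (by rwa [mul_comm q s] at hm)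

lemma coeff_pow_mul {R : Type*} [CommRing R] {φ : PowerSeries R} {s : ℕ}
    (h : ∀ m, m < s → PowerSeries.coeff m φ = 0) :
    ∀ q, PowerSeries.coeff (q * s) (φ ^ q) = (PowerSeries.coeff s φ) ^ q := by
  intro q
  induction q with
  | zero => simp
  | succ q ih =>
      rw [pow_succ, PowerSeries.coeff_mul]
      rw [Finset.sum_eq_single_of_mem (q * s, s)
        (by rw [Finset.HasAntidiagonal.mem_antidiagonal]; ring)]
      · rw [ih, ← pow_succ]
      · rintro ⟨i, j⟩ hij hne
        rw [Finset.HasAntidiagonal.mem_antidiagonal] at hij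
        have hsum : i + j = q * s + s := by rw [hij]; ring
        simp only
        rcases lt_trichotomy i (q * s) with hlt | heq | hgt
        · rw [coeff_pow_lt' h hlt, zero_mul]
        · have hj : j = s := by
            rw [heq] at hsum
            exact Nat.add_left_cancel hsum
          exact absurd (by rw [heq, hj]) hne
        · have hj : j < s := by
            by_contra hc
            push_neg at hc
            have hlt2 : q * s + s < i + j := add_lt_add_of_lt_of_le hgt hc
            exact absurd hsum (Nat.ne_of_gt hlt2)
          rw [h j hj, mul_zero]

lemma coeff_pow_char (φ : PowerSeries (ZMod p)) {n : ℕ} (h : ¬ p ∣ n) :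
    PowerSeries.coeff (R := ZMod p) n (φ ^ p) = 0 := by
  set ψ : Polynomial (ZMod p) := PowerSeries.trunc (n + 1) φ with hψ
  have hdvd : (PowerSeries.X : PowerSeries (ZMod p)) ^ (n + 1) ∣ φ - (ψ : PowerSeries (ZMod p)) := by
    rw [PowerSeries.X_pow_dvd_iff]
    intro m hm
    rw [map_sub, Polynomial.coeff_coe, hψ, PowerSeries.coeff_trunc, if_pos hm, sub_self]
  have h2 : (PowerSeries.X : PowerSeries (ZMod p)) ^ (n + 1) ∣ φ ^ p - (ψ : PowerSeries (ZMod p)) ^ p :=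
    dvd_trans hdvd (sub_dvd_pow_sub_pow φ _ p)
  have h3 : PowerSeries.coeff (R := ZMod p) n (φ ^ p - (ψ : PowerSeries (ZMod p)) ^ p) = 0 :=
    PowerSeries.X_pow_dvd_iff.mp h2 n (by omega)
  rw [map_sub, sub_eq_zero] at h3
  rw [h3, ← Polynomial.coe_pow, Polynomial.coeff_coe]
  have hfrob : ψ ^ p = Polynomial.expand (ZMod p) p ψ := by
    rw [← Polynomial.map_frobenius_expand p ψ, ZMod.frobenius_zmod, Polynomial.map_id]
  rw [hfrob, Polynomial.coeff_expand hp.out.pos, if_neg h]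

lemma supp_mul {φ ψ : PowerSeries (ZMod p)}
    (hφ : ∀ m, ¬ p ∣ m → PowerSeries.coeff (R := ZMod p) m φ = 0)
    (hψ : ∀ m, ¬ p ∣ m → PowerSeries.coeff (R := ZMod p) m ψ = 0) :
    ∀ m, ¬ p ∣ m → PowerSeries.coeff (R := ZMod p) m (φ * ψ) = 0 := by
  intro m hm
  rw [PowerSeries.coeff_mul]
  apply Finset.sum_eq_zero
  rintro ⟨i, j⟩ hij
  rw [Finset.HasAntidiagonal.mem_antidiagonal] at hij
  simp only
  by_cases hi : p ∣ i
  · have hj : ¬ p ∣ j := by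
      intro hj; apply hm; rw [← hij]; exact Nat.dvd_add hi hj
    rw [hψ j hj, mul_zero]
  · rw [hφ i hi, zero_mul]

lemma supp_pow {φ : PowerSeries (ZMod p)}
    (hφ : ∀ m, ¬ p ∣ m → PowerSeries.coeff (R := ZMod p) m φ = 0) :
    ∀ q m, ¬ p ∣ m → PowerSeries.coeff (R := ZMod p) m (φ ^ q) = 0 := by
  intro q
  induction q with
  | zero =>
      intro m hm
      have hm0 : m ≠ 0 := by rintro rfl; exact hm (dvd_zero p)
      simp [PowerSeries.coeff_one, hm0]
  | succ q ih =>
      rw [pow_succ]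
      exact supp_mul ih hφ

noncomputable def Fp : PowerSeries (ZMod p) := PowerSeries.map (Int.castRingHom (ZMod p)) F

lemma Fp_sub_one_pow (k : ℕ) :
    (Fp - 1 : PowerSeries (ZMod p)) ^ k
      = PowerSeries.map (Int.castRingHom (ZMod p)) ((F - 1) ^ k) := by
  rw [map_pow, map_sub, map_one, Fp]

lemma ebar_eq (n k : ℕ) :
    PowerSeries.coeff (R := ZMod p) n ((Fp - 1) ^ k) = ((e n k : ℤ) : ZMod p) := by
  rw [Fp_sub_one_pow, PowerSeries.coeff_map]
  rfl

lemma constantCoeff_Fp_sub_one : PowerSeries.constantCoeff (R := ZMod p) (Fp - 1) = 0 := by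
  rw [← PowerSeries.coeff_zero_eq_constantCoeff_apply]
  have h := ebar_eq (p := p) 0 1
  rw [pow_one] at h
  rw [h, e_eq_zero_of_lt one_pos]
  simp

lemma ord_Fp_sub_one : ∀ m, m < 1 → PowerSeries.coeff (R := ZMod p) m (Fp - 1) = 0 := by
  intro m hm
  interval_cases m
  rw [PowerSeries.coeff_zero_eq_constantCoeff_apply]
  exact constantCoeff_Fp_sub_one

lemma coeff_one_Fp_sub_one : PowerSeries.coeff (R := ZMod p) 1 (Fp - 1) = -1 := by
  have h := ebar_eq (p := p) 1 1
  rw [pow_one] at h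
  rw [h]
  have : e 1 1 = -1 := by
    rw [e, pow_one, map_sub, PowerSeries.coeff_one]
    simp [F, PowerSeries.coeff_mk, A_one]
  rw [this]
  push_cast
  ring

lemma ord_H : ∀ m, m < p → PowerSeries.coeff (R := ZMod p) m ((Fp - 1) ^ p) = 0 := by
  intro m hm
  exact coeff_pow_lt' ord_Fp_sub_one (by omega)

lemma supp_H : ∀ m, ¬ p ∣ m → PowerSeries.coeff (R := ZMod p) m ((Fp - 1) ^ p) = 0 :=
  fun m hm => coeff_pow_char (Fp - 1) hm

lemma coeff_p_H : PowerSeries.coeff (R := ZMod p) p ((Fp - 1) ^ p) = -1 := by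
  have h := coeff_pow_mul (ord_Fp_sub_one (p := p)) p
  rw [mul_one] at h
  rw [h, coeff_one_Fp_sub_one]
  exact neg_one_pow_char (ZMod p) p

lemma e_congr {q r b : ℕ} (hr : r < p) (hb : b ≤ r) :
    ((e (q * p + r) (q * p + b) : ℤ) : ZMod p) = (-1) ^ q * ((e r b : ℤ) : ZMod p) := by
  rw [← ebar_eq, ← ebar_eq]
  have hsplit : (Fp - 1 : PowerSeries (ZMod p)) ^ (q * p + b)
      = ((Fp - 1) ^ p) ^ q * (Fp - 1) ^ b := by
    rw [← pow_mul, ← pow_add, mul_comm p q]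
  rw [hsplit, PowerSeries.coeff_mul]
  rw [Finset.sum_eq_single_of_mem (q * p, r)
    (by rw [Finset.HasAntidiagonal.mem_antidiagonal])]
  · have h1 : PowerSeries.coeff (R := ZMod p) (q * p) (((Fp - 1) ^ p) ^ q) = (-1) ^ q := by
      have := coeff_pow_mul (φ := (Fp - 1) ^ p) ord_H q
      rw [this, coeff_p_H]
    rw [h1]
  · rintro ⟨i, j⟩ hij hne
    rw [Finset.HasAntidiagonal.mem_antidiagonal] at hij
    simp only
    rcases lt_trichotomy i (q * p) with hlt | heq | hgt
    · rw [coeff_pow_lt' ord_H hlt, zero_mul]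
    · have hj : j = r := by
        rw [heq] at hij
        exact Nat.add_left_cancel hij
      exact absurd (by rw [heq, hj]) hne
    · by_cases hdvd : p ∣ i
      · exfalso
        obtain ⟨t, rfl⟩ := hdvd
        have hqt : q < t := by
          by_contra hc
          push_neg at hc
          have h1 : p * t ≤ p * q := Nat.mul_le_mul_left p hc
          have h2 : q * p < p * t := hgt
          rw [mul_comm q p] at h2
          exact absurd (lt_of_lt_of_le h2 h1) (lt_irrefl _)
        have h3 : p * (q + 1) ≤ p * t := Nat.mul_le_mul_left p hqt
        have h5 : p * (q + 1) = q * p + p := by ring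
        have h6 : p * t ≤ q * p + r := hij ▸ Nat.le_add_right (p * t) j
        have h7 : q * p + p ≤ q * p + r := le_trans (h5 ▸ h3) h6
        have h8 : p ≤ r := Nat.le_of_add_le_add_left h7
        exact absurd hr (not_lt.mpr h8)
      · rw [supp_pow supp_H q i hdvd, zero_mul]

-- ff mod p lemmas
lemma prod_range_p :
    ∏ i ∈ Finset.range p, (Polynomial.X - Polynomial.C (i : ZMod p))
      = Polynomial.X ^ p - Polynomial.X := by
  have hcard : Fintype.card (ZMod p) = p := ZMod.card p
  have hmonic : (Polynomial.X ^ p - Polynomial.X : Polynomial (ZMod p)).Monic := by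
    apply Polynomial.monic_X_pow_sub
    rw [Polynomial.degree_X]
    exact_mod_cast hp.out.one_lt
  have hroots : (Polynomial.X ^ p - Polynomial.X : Polynomial (ZMod p)).roots
      = Finset.univ.val := by
    have := FiniteField.roots_X_pow_card_sub_X (ZMod p)
    rwa [hcard] at this
  have hdeg : (Polynomial.X ^ p - Polynomial.X : Polynomial (ZMod p)).natDegree = p :=
    FiniteField.X_pow_card_sub_X_natDegree_eq (ZMod p) hp.out.one_lt
  have hcards : (Polynomial.X ^ p - Polynomial.X : Polynomial (ZMod p)).roots.card
      = (Polynomial.X ^ p - Polynomial.X : Polynomial (ZMod p)).natDegree := by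
    rw [hroots, hdeg, ← Finset.card_def, Finset.card_univ, hcard]
  have hprod := Polynomial.prod_multiset_X_sub_C_of_monic_of_roots_card_eq hmonic hcards
  rw [hroots] at hprod
  have hinj : ∀ x ∈ Finset.range p, ∀ y ∈ Finset.range p,
      (x : ZMod p) = (y : ZMod p) → x = y := by
    intro x hx y hy hxy
    have := congrArg ZMod.val hxy
    rwa [ZMod.val_cast_of_lt (Finset.mem_range.mp hx),
      ZMod.val_cast_of_lt (Finset.mem_range.mp hy)] at this
  have himg : Finset.univ = (Finset.range p).image (Nat.cast : ℕ → ZMod p) := by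
    symm
    apply Finset.eq_univ_of_card
    rw [Finset.card_image_of_injOn (by
      intro x hx y hy hxy
      exact hinj x hx y hy hxy), Finset.card_range, hcard]
  calc ∏ i ∈ Finset.range p, (Polynomial.X - Polynomial.C (i : ZMod p))
      = ∏ a ∈ (Finset.range p).image (Nat.cast : ℕ → ZMod p),
          (Polynomial.X - Polynomial.C a) := by rw [Finset.prod_image hinj]
    _ = (Finset.univ.val.map fun a : ZMod p => Polynomial.X - Polynomial.C a).prod := by
        rw [← himg]
        exact Finset.prod_eq_multiset_prod _ _
    _ = Polynomial.X ^ p - Polynomial.X := hprod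

lemma ff_block (m b : ℕ) :
    Polynomial.map (Int.castRingHom (ZMod p))
        (∏ i ∈ Finset.range b, (Polynomial.X - Polynomial.C ((m * p + i : ℕ) : ℤ)))
      = ∏ i ∈ Finset.range b, (Polynomial.X - Polynomial.C (i : ZMod p)) := by
  rw [Polynomial.map_prod]
  apply Finset.prod_congr rfl
  intro i _
  rw [Polynomial.map_sub, Polynomial.map_X, Polynomial.map_C]
  have hcast : (((m * p + i : ℕ) : ℤ) : ZMod p) = (i : ZMod p) := by
    push_cast [ZMod.natCast_self]
    ring
  rw [show (Int.castRingHom (ZMod p)) ((m * p + i : ℕ) : ℤ)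
      = (((m * p + i : ℕ) : ℤ) : ZMod p) from rfl, hcast]

lemma ff_map (b : ℕ) :
    (ff b).map (Int.castRingHom (ZMod p))
      = ∏ i ∈ Finset.range b, (Polynomial.X - Polynomial.C (i : ZMod p)) := by
  have := ff_block (p := p) 0 b
  simpa [ff] using this

lemma ff_qp (q : ℕ) :
    (ff (q * p)).map (Int.castRingHom (ZMod p)) = (Polynomial.X ^ p - Polynomial.X) ^ q := by
  induction q with
  | zero => simp [ff]
  | succ q ih =>
      have hsplit : (q + 1) * p = q * p + p := by ring
      rw [hsplit, ff, Finset.prod_range_add, Polynomial.map_mul]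
      rw [show (∏ i ∈ Finset.range (q * p), (Polynomial.X - Polynomial.C (i : ℤ))) = ff (q * p)
        from rfl]
      rw [ih]
      rw [show (∏ i ∈ Finset.range p, (Polynomial.X - Polynomial.C ((q * p + i : ℕ) : ℤ)))
          = ∏ i ∈ Finset.range p, (Polynomial.X - Polynomial.C ((q * p + i : ℕ) : ℤ)) from rfl]
      rw [ff_block q p, prod_range_p, pow_succ]

lemma ff_qp_add (q b : ℕ) :
    (ff (q * p + b)).map (Int.castRingHom (ZMod p))
      = (Polynomial.X ^ p - Polynomial.X) ^ q * (ff b).map (Int.castRingHom (ZMod p)) := by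
  rw [ff, Finset.prod_range_add, Polynomial.map_mul]
  rw [show (∏ i ∈ Finset.range (q * p), (Polynomial.X - Polynomial.C (i : ℤ))) = ff (q * p)
    from rfl]
  rw [ff_qp, ff_block q b, ff_map]

end ModP

end GAux

theorem stmt1 (p : ℕ) (hp : p.Prime) (n : ℕ) :
    (g n).map (Int.castRingHom (ZMod p)) =
      (g (n % p)).map (Int.castRingHom (ZMod p)) *
        (Polynomial.X - Polynomial.X ^ p) ^ (n / p) := by
  haveI := Fact.mk hp
  have hrlt : n % p < p := Nat.mod_lt n hp.pos
  have hn : n = (n / p) * p + n % p := by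
    rw [mul_comm]
    exact (Nat.div_add_mod n p).symm
  set q := n / p with hqdef
  set r := n % p with hrdef
  -- the mapped term
  have hterm0 : ∀ m k : ℕ, Polynomial.map (Int.castRingHom (ZMod p))
      (Polynomial.C (((m.factorial / k.factorial : ℕ) : ℤ) * GAux.e m k) * GAux.ff k)
      = Polynomial.C (((m.factorial / k.factorial : ℕ) : ZMod p) * ((GAux.e m k : ℤ) : ZMod p))
          * (GAux.ff k).map (Int.castRingHom (ZMod p)) := by
    intro m k
    rw [Polynomial.map_mul, Polynomial.map_C]
    congr 1
    rw [map_mul, eq_intCast, eq_intCast, Int.cast_natCast]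
  have himg_sub : (Finset.range (r + 1)).image (fun b => q * p + b)
      ⊆ Finset.range (n + 1) := by
    intro x hx
    rw [Finset.mem_image] at hx
    obtain ⟨b, hb, rfl⟩ := hx
    rw [Finset.mem_range] at hb ⊢
    omega
  have hinj : ∀ x ∈ Finset.range (r + 1), ∀ y ∈ Finset.range (r + 1),
      q * p + x = q * p + y → x = y := by
    intro x _ y _ h
    omega
  have hvanish : ∀ x ∈ Finset.range (n + 1),
      x ∉ (Finset.range (r + 1)).image (fun b => q * p + b) →
      Polynomial.C (((n.factorial / x.factorial : ℕ) : ZMod p) * ((GAux.e n x : ℤ) : ZMod p))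
          * (GAux.ff x).map (Int.castRingHom (ZMod p)) = 0 := by
    intro x hx hnx
    have hxn : x ≤ n := Nat.lt_succ_iff.mp (Finset.mem_range.mp hx)
    have hxq : x / p ≤ q := by
      rw [hqdef]
      exact Nat.div_le_div_right hxn
    have hxlt : x / p < q := by
      rcases lt_or_eq_of_le hxq with h | h
      · exact h
      · exfalso
        apply hnx
        rw [Finset.mem_image]
        refine ⟨x - q * p, ?_, ?_⟩
        · rw [Finset.mem_range]
          have h1 : q * p ≤ x := by
            have := Nat.div_mul_le_self x p
            rw [h] at this
            exact this
          omega
        · have h1 : q * p ≤ x := by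
            have := Nat.div_mul_le_self x p
            rw [h] at this
            exact this
          omega
    rw [GAux.fact_ratio_zero hxn hxlt, zero_mul, map_zero,
      zero_mul]
  have hsign : (Polynomial.X - Polynomial.X ^ p : Polynomial (ZMod p)) ^ q
      = (-1) ^ q * (Polynomial.X ^ p - Polynomial.X) ^ q := by
    rw [show (Polynomial.X - Polynomial.X ^ p : Polynomial (ZMod p))
        = -(Polynomial.X ^ p - Polynomial.X) from by ring, neg_pow]
  rw [GAux.g_eq_G, GAux.g_eq_G, GAux.G, GAux.G, Polynomial.map_sum, Polynomial.map_sum]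
  calc ∑ k ∈ Finset.range (n + 1), Polynomial.map (Int.castRingHom (ZMod p))
        (Polynomial.C (((n.factorial / k.factorial : ℕ) : ℤ) * GAux.e n k) * GAux.ff k)
      = ∑ k ∈ Finset.range (n + 1),
          Polynomial.C (((n.factorial / k.factorial : ℕ) : ZMod p) * ((GAux.e n k : ℤ) : ZMod p))
            * (GAux.ff k).map (Int.castRingHom (ZMod p)) :=
        Finset.sum_congr rfl (fun k _ => hterm0 n k)
    _ = ∑ k ∈ (Finset.range (r + 1)).image (fun b => q * p + b),
          Polynomial.C (((n.factorial / k.factorial : ℕ) : ZMod p) * ((GAux.e n k : ℤ) : ZMod p))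
            * (GAux.ff k).map (Int.castRingHom (ZMod p)) :=
        (Finset.sum_subset himg_sub hvanish).symm
    _ = ∑ b ∈ Finset.range (r + 1),
          Polynomial.C (((n.factorial / (q * p + b).factorial : ℕ) : ZMod p)
              * ((GAux.e n (q * p + b) : ℤ) : ZMod p))
            * (GAux.ff (q * p + b)).map (Int.castRingHom (ZMod p)) :=
        Finset.sum_image hinj
    _ = ∑ b ∈ Finset.range (r + 1),
          (Polynomial.C (((r.factorial / b.factorial : ℕ) : ZMod p)
              * ((GAux.e r b : ℤ) : ZMod p))
            * (GAux.ff b).map (Int.castRingHom (ZMod p)))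
            * (Polynomial.X - Polynomial.X ^ p) ^ q := by
        apply Finset.sum_congr rfl
        intro b hb
        have hbr : b ≤ r := Nat.lt_succ_iff.mp (Finset.mem_range.mp hb)
        rw [show n.factorial = (q * p + r).factorial from by rw [← hn],
          show GAux.e n (q * p + b) = GAux.e (q * p + r) (q * p + b) from by rw [← hn]]
        rw [GAux.fact_ratio_congr hbr, GAux.e_congr hrlt hbr, GAux.ff_qp_add q b, hsign]
        simp only [map_mul, map_pow, map_neg, map_one]
        ring
    _ = (∑ b ∈ Finset.range (r + 1),
          Polynomial.C (((r.factorial / b.factorial : ℕ) : ZMod p)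
              * ((GAux.e r b : ℤ) : ZMod p))
            * (GAux.ff b).map (Int.castRingHom (ZMod p)))
            * (Polynomial.X - Polynomial.X ^ p) ^ q := by
        rw [Finset.sum_mul]
    _ = (∑ k ∈ Finset.range (r + 1), Polynomial.map (Int.castRingHom (ZMod p))
        (Polynomial.C (((r.factorial / k.factorial : ℕ) : ℤ) * GAux.e r k) * GAux.ff k))
            * (Polynomial.X - Polynomial.X ^ p) ^ q := by
        rw [Finset.sum_congr rfl (fun k _ => hterm0 r k)]
end

section
/- Let m ∈ ℕ₊. Then t_m(0) = 1, t_m(1) = -m, and for every n ∈ ℕ one has t_m(2n) = Σ_{j=0}^{⌊m/2⌋} C(m,2j)·t_m(n-j) and t_m(2n+1) = -Σ_{j=0}^{⌊(m-1)/2⌋} C(m,2j+1)·t_m(n-j), where t_m(k) is set to 0 for k < 0. -/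
open PowerSeries Finset

/-- `tE m x` is the coefficient of `x`-th power in `T(x)^m`, extended by `0`
for negative indices. -/
noncomputable def tE (m : ℕ) (x : ℤ) : ℤ :=
  if x < 0 then 0 else PowerSeries.coeff x.toNat (T ^ m)

noncomputable def EE (f : PowerSeries ℤ) : PowerSeries ℤ :=
  PowerSeries.mk fun n => if 2 ∣ n then PowerSeries.coeff (n / 2) f else 0

lemma coeff_EE (f : PowerSeries ℤ) (n : ℕ) :
    PowerSeries.coeff n (EE f) = if 2 ∣ n then PowerSeries.coeff (n / 2) f else 0 := by
  simp [EE]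

lemma EE_mul (f g : PowerSeries ℤ) : EE (f * g) = EE f * EE g := by
  ext n
  rw [coeff_EE]
  rcases Nat.even_or_odd' n with ⟨k, hk | hk⟩ <;> subst hk
  · rw [if_pos ⟨k, rfl⟩, Nat.mul_div_cancel_left _ two_pos,
      PowerSeries.coeff_mul, PowerSeries.coeff_mul]
    symm
    rw [← Finset.sum_filter_of_ne (p := fun p : ℕ × ℕ => 2 ∣ p.1)
      (fun p hp h => by
        by_contra hd
        rw [coeff_EE, if_neg hd, zero_mul] at h
        exact h rfl)]
    refine Finset.sum_nbij' (fun q => (q.1 / 2, q.2 / 2)) (fun p => (2 * p.1, 2 * p.2))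
      ?_ ?_ ?_ ?_ ?_
    · rintro ⟨a, b⟩ hq
      simp only [Finset.mem_filter, HasAntidiagonal.mem_antidiagonal] at hq ⊢
      obtain ⟨h1, c, hc⟩ := hq
      omega
    · rintro ⟨a, b⟩ hp
      simp only [Finset.mem_filter, HasAntidiagonal.mem_antidiagonal] at hp ⊢
      omega
    · rintro ⟨a, b⟩ hq
      simp only [Finset.mem_filter, HasAntidiagonal.mem_antidiagonal] at hq
      obtain ⟨h1, c, hc⟩ := hq
      simp only [Prod.mk.injEq]
      omega
    · rintro ⟨a, b⟩ _
      simp only [Prod.mk.injEq]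
      omega
    · rintro ⟨a, b⟩ hq
      simp only [Finset.mem_filter, HasAntidiagonal.mem_antidiagonal] at hq
      obtain ⟨h1, c, hc⟩ := hq
      have hb : 2 ∣ b := by omega
      simp only [coeff_EE, if_pos (show 2 ∣ a by omega), if_pos hb]
  · rw [if_neg (by omega), PowerSeries.coeff_mul]
    refine (Finset.sum_eq_zero fun p hp => ?_).symm
    rw [HasAntidiagonal.mem_antidiagonal] at hp
    rw [coeff_EE, coeff_EE]
    rcases Nat.even_or_odd p.1 with ⟨a, ha⟩ | ⟨a, ha⟩
    · rw [if_neg (show ¬ 2 ∣ p.2 by omega), mul_zero]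
    · rw [if_neg (by omega), zero_mul]

lemma EE_one : EE 1 = 1 := by
  ext n
  simp only [coeff_EE, PowerSeries.coeff_one]
  split_ifs <;> omega

lemma EE_pow (f : PowerSeries ℤ) (m : ℕ) : EE (f ^ m) = (EE f) ^ m := by
  induction m with
  | zero => simp only [pow_zero]; exact EE_one
  | succ k ih => rw [pow_succ, pow_succ, EE_mul, ih]

lemma digitsum_even (k : ℕ) : (Nat.digits 2 (2 * k)).sum = (Nat.digits 2 k).sum := by
  rcases Nat.eq_zero_or_pos k with rfl | hk
  · simp
  · rw [Nat.digits_def' (by norm_num) (by omega)]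
    simp [Nat.mul_div_cancel_left _ two_pos, Nat.mul_mod_right]

lemma digitsum_odd (k : ℕ) : (Nat.digits 2 (2 * k + 1)).sum = (Nat.digits 2 k).sum + 1 := by
  rw [Nat.digits_def' (by norm_num) (by omega)]
  have h1 : (2 * k + 1) % 2 = 1 := by omega
  have h2 : (2 * k + 1) / 2 = k := by omega
  rw [h1, h2]
  simp [Nat.add_comm]

lemma T_eq : T = (1 - PowerSeries.X) * EE T := by
  ext n
  rw [sub_mul, one_mul, map_sub]
  rcases Nat.even_or_odd' n with ⟨k, hk | hk⟩ <;> subst hk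
  · have hx : PowerSeries.coeff (2 * k) (PowerSeries.X * EE T) = 0 := by
      rcases Nat.eq_zero_or_pos k with rfl | hk
      · simpa using PowerSeries.coeff_zero_X_mul (EE T)
      · have : 2 * k = (2 * (k - 1) + 1) + 1 := by omega
        rw [this, PowerSeries.coeff_succ_X_mul, coeff_EE, if_neg (by omega)]
    rw [hx, sub_zero, coeff_EE, if_pos ⟨k, rfl⟩, Nat.mul_div_cancel_left _ two_pos]
    simp [T, digitsum_even]
  · rw [PowerSeries.coeff_succ_X_mul, coeff_EE, coeff_EE,
      if_neg (by omega), if_pos ⟨k, rfl⟩, Nat.mul_div_cancel_left _ two_pos]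
    simp only [T, PowerSeries.coeff_mk]
    rw [digitsum_odd, pow_succ]
    ring

lemma Tm_eq (m : ℕ) : T ^ m = (1 - PowerSeries.X) ^ m * EE (T ^ m) := by
  conv_lhs => rw [T_eq]
  rw [mul_pow, EE_pow]

lemma sum_even_odd (M : ℕ) (F : ℕ → ℤ) :
    ∑ k ∈ Finset.range M, F k =
      (∑ j ∈ Finset.range ((M + 1) / 2), F (2 * j)) +
      ∑ j ∈ Finset.range (M / 2), F (2 * j + 1) := by
  induction M with
  | zero => simp
  | succ M ih =>
    rw [Finset.sum_range_succ, ih]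
    rcases Nat.even_or_odd' M with ⟨j, hM | hM⟩
    · have h1 : (M + 1 + 1) / 2 = j + 1 := by omega
      have h2 : (M + 1) / 2 = j := by omega
      have h3 : M / 2 = j := by omega
      rw [h1, h2, h3, Finset.sum_range_succ]
      rw [show 2 * j = M by omega]
      ring
    · have h1 : (M + 1 + 1) / 2 = j + 1 := by omega
      have h2 : (M + 1) / 2 = j + 1 := by omega
      have h3 : M / 2 = j := by omega
      rw [h1, h2, h3, Finset.sum_range_succ (f := fun i => F (2 * i + 1))]
      rw [show 2 * j + 1 = M by omega]
      ring

lemma coeff_Tm (m N : ℕ) :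
    PowerSeries.coeff N (T ^ m) =
      ∑ k ∈ Finset.range (m + 1), (-1 : ℤ) ^ k * m.choose k *
        (if 2 ∣ N - k ∧ k ≤ N then PowerSeries.coeff ((N - k) / 2) (T ^ m) else 0) := by
  conv_lhs => rw [Tm_eq m]
  have hexp : (1 - PowerSeries.X : PowerSeries ℤ) ^ m =
      ∑ k ∈ Finset.range (m + 1),
        ((-1 : ℤ) ^ k * m.choose k) • (PowerSeries.X : PowerSeries ℤ) ^ k := by
    rw [sub_eq_neg_add, add_pow]
    refine Finset.sum_congr rfl fun k _ => ?_
    rw [neg_pow, one_pow, mul_one]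
    simp [zsmul_eq_mul]
    ring
  rw [hexp, Finset.sum_mul, map_sum]
  refine Finset.sum_congr rfl fun k _ => ?_
  rw [smul_mul_assoc, map_smul, smul_eq_mul, PowerSeries.coeff_X_pow_mul', coeff_EE]
  by_cases h1 : k ≤ N
  · by_cases h2 : 2 ∣ N - k
    · rw [if_pos h1, if_pos h2, if_pos ⟨h2, h1⟩]
    · rw [if_pos h1, if_neg h2, if_neg (fun h => h2 h.1)]
  · rw [if_neg h1, if_neg (fun h => h1 h.2)]

lemma tE_nat (m n : ℕ) : tE m (n : ℤ) = PowerSeries.coeff n (T ^ m) := by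
  simp [tE]

lemma tE_neg (m : ℕ) {x : ℤ} (h : x < 0) : tE m x = 0 := by
  simp [tE, h]

lemma part3 (m n : ℕ) :
    tE m (2 * (n : ℤ)) =
      ∑ j ∈ Finset.range (m / 2 + 1),
        (m.choose (2 * j) : ℤ) * tE m ((n : ℤ) - (j : ℤ)) := by
  have h0 : (2 * (n : ℤ)) = ((2 * n : ℕ) : ℤ) := by push_cast; ring
  rw [h0, tE_nat, coeff_Tm, sum_even_odd]
  have hodd : ∑ j ∈ Finset.range ((m + 1) / 2),
      ((-1 : ℤ) ^ (2 * j + 1) * m.choose (2 * j + 1) *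
        (if 2 ∣ 2 * n - (2 * j + 1) ∧ 2 * j + 1 ≤ 2 * n then
          PowerSeries.coeff ((2 * n - (2 * j + 1)) / 2) (T ^ m) else 0)) = 0 := by
    refine Finset.sum_eq_zero fun j _ => ?_
    rw [if_neg (by omega), mul_zero]
  rw [hodd, add_zero, show (m + 1 + 1) / 2 = m / 2 + 1 by omega]
  refine Finset.sum_congr rfl fun j _ => ?_
  by_cases hj : j ≤ n
  · rw [if_pos ⟨by omega, by omega⟩, show (2 * n - 2 * j) / 2 = n - j by omega,
      show (n : ℤ) - (j : ℤ) = ((n - j : ℕ) : ℤ) by omega, tE_nat]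
    simp [pow_mul]
  · rw [if_neg (by omega), tE_neg m (by omega : (n : ℤ) - (j : ℤ) < 0), mul_zero, mul_zero]

lemma part4 (m n : ℕ) (hm : 1 ≤ m) :
    tE m (2 * (n : ℤ) + 1) =
      -∑ j ∈ Finset.range ((m - 1) / 2 + 1),
        (m.choose (2 * j + 1) : ℤ) * tE m ((n : ℤ) - (j : ℤ)) := by
  have h0 : (2 * (n : ℤ) + 1) = ((2 * n + 1 : ℕ) : ℤ) := by push_cast; ring
  rw [h0, tE_nat, coeff_Tm, sum_even_odd]
  have heven : ∑ j ∈ Finset.range ((m + 1 + 1) / 2),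
      ((-1 : ℤ) ^ (2 * j) * m.choose (2 * j) *
        (if 2 ∣ 2 * n + 1 - 2 * j ∧ 2 * j ≤ 2 * n + 1 then
          PowerSeries.coeff ((2 * n + 1 - 2 * j) / 2) (T ^ m) else 0)) = 0 := by
    refine Finset.sum_eq_zero fun j _ => ?_
    rw [if_neg (by omega), mul_zero]
  rw [heven, zero_add, show (m + 1) / 2 = (m - 1) / 2 + 1 by omega, ← Finset.sum_neg_distrib]
  refine Finset.sum_congr rfl fun j _ => ?_
  by_cases hj : j ≤ n
  · rw [if_pos ⟨by omega, by omega⟩, show (2 * n + 1 - (2 * j + 1)) / 2 = n - j by omega,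
      show (n : ℤ) - (j : ℤ) = ((n - j : ℕ) : ℤ) by omega, tE_nat]
    rw [pow_succ, pow_mul]
    simp
  · rw [if_neg (by omega), tE_neg m (by omega : (n : ℤ) - (j : ℤ) < 0), mul_zero, mul_zero,
      neg_zero]

theorem stmt2 (m : ℕ) (hm : 1 ≤ m) :
    tE m 0 = 1 ∧ tE m 1 = -(m : ℤ) ∧
      (∀ n : ℕ,
        tE m (2 * (n : ℤ)) =
          ∑ j ∈ Finset.range (m / 2 + 1),
            (m.choose (2 * j) : ℤ) * tE m ((n : ℤ) - (j : ℤ))) ∧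
      ∀ n : ℕ,
        tE m (2 * (n : ℤ) + 1) =
          -∑ j ∈ Finset.range ((m - 1) / 2 + 1),
            (m.choose (2 * j + 1) : ℤ) * tE m ((n : ℤ) - (j : ℤ)) := by
  have h0 : tE m 0 = 1 := by
    have : tE m ((0 : ℕ) : ℤ) = PowerSeries.coeff 0 (T ^ m) := tE_nat m 0
    simp only [Nat.cast_zero] at this
    rw [this, PowerSeries.coeff_zero_eq_constantCoeff, map_pow]
    have : PowerSeries.constantCoeff T = 1 := by simp [T]
    rw [this, one_pow]
  refine ⟨h0, ?_, fun n => part3 m n, fun n => part4 m n hm⟩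
  have h1 : tE m (2 * ((0 : ℕ) : ℤ) + 1) =
      -∑ j ∈ Finset.range ((m - 1) / 2 + 1),
        (m.choose (2 * j + 1) : ℤ) * tE m (((0 : ℕ) : ℤ) - (j : ℤ)) := part4 m 0 hm
  simp only [Nat.cast_zero, mul_zero, zero_add, zero_sub] at h1
  rw [h1]
  rw [Finset.sum_eq_single 0]
  · simp [h0]
  · intro b _ hb
    rw [tE_neg m (by omega : -(b : ℤ) < 0), mul_zero]
  · intro h
    exact absurd (Finset.mem_range.mpr (by omega)) h
end

section
/- For every n ∈ ℕ: t_3(4n) and t_3(4n+1) are odd (so ν₂(t_3(4n)) = ν₂(t_3(4n+1)) = 0), and ν₂(t_3(4n+3)) = ν₂(t_3(4n+6)) = 3 + ν₂(t_3(n)), the valuations being taken in ℕ ∪ {∞} with ν₂(0) = ∞ and with the convention t_3(k) = 0 for k < 0 in the last equality. -/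
namespace PTMaux

open PowerSeries Finset

def t (n : ℕ) : ℤ := (-1) ^ (Nat.digits 2 n).sum

lemma coeff_T (n : ℕ) : PowerSeries.coeff (R := ℤ) n T = t n := by
  simp [T, t]

lemma t_zero : t 0 = 1 := by simp [t]

lemma t_even (n : ℕ) : t (2 * n) = t n := by
  rcases Nat.eq_zero_or_pos n with h | h
  · simp [h]
  · rw [t, Nat.digits_def' (by norm_num) (by omega)]
    simp [Nat.mul_div_cancel_left _ (by norm_num : 0 < 2), Nat.mul_mod_right, t]

lemma t_odd (n : ℕ) : t (2 * n + 1) = -t n := by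
  rw [t, Nat.digits_def' (by norm_num) (by omega)]
  have h1 : (2 * n + 1) % 2 = 1 := by omega
  have h2 : (2 * n + 1) / 2 = n := by omega
  rw [h1, h2]
  simp [t, pow_succ, pow_add, mul_comm]

/-- `T(x²)`, the expand-by-two of `T`. -/
noncomputable def E : PowerSeries ℤ :=
  PowerSeries.mk fun n => if 2 ∣ n then t (n / 2) else 0

lemma coeff_E_even (n : ℕ) : PowerSeries.coeff (R := ℤ) (2 * n) E = t n := by
  simp [E, Nat.mul_div_cancel_left _ (by norm_num : 0 < 2)]

lemma coeff_E_odd (n : ℕ) : PowerSeries.coeff (R := ℤ) (2 * n + 1) E = 0 := by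
  simp only [E, PowerSeries.coeff_mk, ite_eq_right_iff]
  intro h; omega

lemma funEq : T = (1 - PowerSeries.X) * E := by
  ext n
  rw [sub_mul, one_mul, map_sub, coeff_T]
  rcases n with _ | n
  · simp [E, t_zero, PowerSeries.coeff_zero_eq_constantCoeff]
  · rw [PowerSeries.coeff_succ_X_mul]
    rcases Nat.even_or_odd' n with ⟨k, hk | hk⟩
    · subst hk
      rw [coeff_E_odd, t_odd, coeff_E_even]
      ring
    · subst hk
      rw [coeff_E_odd, show 2*k+1+1 = 2*(k+1) by ring, coeff_E_even, t_even]
      ring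

lemma sum_even (k : ℕ) (h : ℕ → ℤ) (h0 : ∀ j, h (2*j+1) = 0) :
    ∑ i ∈ Finset.range (2*k+1), h i = ∑ i ∈ Finset.range (k+1), h (2*i) := by
  induction k with
  | zero => simp
  | succ k ih =>
    rw [Finset.sum_range_succ (n := k+1), ← ih,
      show 2*(k+1)+1 = (2*k+1)+1+1 by ring, Finset.sum_range_succ,
      Finset.sum_range_succ (n := 2*k+1), h0, show 2*k+1+1 = 2*(k+1) by ring]
    ring

lemma mul_even_odd (f g F G : PowerSeries ℤ)
    (hf1 : ∀ j, PowerSeries.coeff (R := ℤ) (2*j+1) f = 0)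
    (hg1 : ∀ j, PowerSeries.coeff (R := ℤ) (2*j+1) g = 0)
    (hf : ∀ j, PowerSeries.coeff (R := ℤ) (2*j) f = PowerSeries.coeff (R := ℤ) j F)
    (hg : ∀ j, PowerSeries.coeff (R := ℤ) (2*j) g = PowerSeries.coeff (R := ℤ) j G) :
    (∀ j, PowerSeries.coeff (R := ℤ) (2*j+1) (f*g) = 0) ∧
      ∀ j, PowerSeries.coeff (R := ℤ) (2*j) (f*g) = PowerSeries.coeff (R := ℤ) j (F*G) := by
  constructor
  · intro j
    rw [PowerSeries.coeff_mul]
    apply Finset.sum_eq_zero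
    rintro ⟨a, b⟩ hab
    rw [Finset.HasAntidiagonal.mem_antidiagonal] at hab
    rcases Nat.even_or_odd' a with ⟨c, hc | hc⟩
    · have hb : b = 2*(j-c)+1 := by omega
      rw [hb, hg1, mul_zero]
    · rw [hc, hf1, zero_mul]
  · intro j
    rw [PowerSeries.coeff_mul, PowerSeries.coeff_mul,
      Finset.Nat.sum_antidiagonal_eq_sum_range_succ_mk,
      Finset.Nat.sum_antidiagonal_eq_sum_range_succ_mk,
      sum_even j (fun i => PowerSeries.coeff (R := ℤ) i f * PowerSeries.coeff (R := ℤ) (2*j - i) g)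
        (fun i => by rw [hf1, zero_mul])]
    apply Finset.sum_congr rfl
    intro i hi
    rw [Finset.mem_range] at hi
    rw [hf, show 2*j - 2*i = 2*(j-i) by omega, hg]

lemma E3 : (∀ j, PowerSeries.coeff (R := ℤ) (2*j+1) (E*E*E) = 0) ∧
    ∀ j, PowerSeries.coeff (R := ℤ) (2*j) (E*E*E) = PowerSeries.coeff (R := ℤ) j (T*T*T) := by
  have E2 := mul_even_odd E E T T coeff_E_odd coeff_E_odd
    (fun j => by rw [coeff_E_even, coeff_T]) (fun j => by rw [coeff_E_even, coeff_T])
  exact mul_even_odd (E*E) E (T*T) T E2.1 coeff_E_odd E2.2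
    (fun j => by rw [coeff_E_even, coeff_T])

lemma b1 (j : ℕ) : PowerSeries.coeff (R := ℤ) (2*j+1) (E^3) = 0 := by
  rw [show (E:PowerSeries ℤ)^3 = E*E*E by ring]
  exact E3.1 j

lemma b0 (j : ℕ) : PowerSeries.coeff (R := ℤ) (2*j) (E^3) = PowerSeries.coeff (R := ℤ) j (T^3) := by
  rw [show (E:PowerSeries ℤ)^3 = E*E*E by ring, show (T:PowerSeries ℤ)^3 = T*T*T by ring]
  exact E3.2 j

lemma hT3 : T^3 = E^3 - 3*(E^3*PowerSeries.X^1) + 3*(E^3*PowerSeries.X^2)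
    - E^3*PowerSeries.X^3 := by
  rw [funEq]; ring

lemma key (m : ℕ) : PowerSeries.coeff (R := ℤ) m (T^3) =
    PowerSeries.coeff (R := ℤ) m (E^3)
    - 3 * PowerSeries.coeff (R := ℤ) m (E^3*PowerSeries.X^1)
    + 3 * PowerSeries.coeff (R := ℤ) m (E^3*PowerSeries.X^2)
    - PowerSeries.coeff (R := ℤ) m (E^3*PowerSeries.X^3) := by
  rw [hT3,
    show (3:PowerSeries ℤ)*(E^3*PowerSeries.X^1) =
      E^3*PowerSeries.X^1 + E^3*PowerSeries.X^1 + E^3*PowerSeries.X^1 by ring,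
    show (3:PowerSeries ℤ)*(E^3*PowerSeries.X^2) =
      E^3*PowerSeries.X^2 + E^3*PowerSeries.X^2 + E^3*PowerSeries.X^2 by ring]
  simp only [map_sub, map_add]
  ring

lemma R1 (n : ℕ) : PowerSeries.coeff (R := ℤ) (2*n+2) (T^3) =
    PowerSeries.coeff (R := ℤ) (n+1) (T^3) + 3 * PowerSeries.coeff (R := ℤ) n (T^3) := by
  rw [key, PowerSeries.coeff_mul_X_pow', PowerSeries.coeff_mul_X_pow',
    PowerSeries.coeff_mul_X_pow', if_pos (by omega : 1 ≤ 2*n+2),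
    if_pos (by omega : 2 ≤ 2*n+2), show 2*n+2-1 = 2*n+1 by omega, b1,
    show 2*n+2-2 = 2*n by omega, b0]
  rcases n with _ | m
  · rw [if_neg (by omega), show 2*0+2 = 2*(0+1) by norm_num, b0]; ring
  · rw [if_pos (by omega : 3 ≤ 2*(m+1)+2), show 2*(m+1)+2-3 = 2*m+1 by omega, b1,
      show 2*(m+1)+2 = 2*(m+1+1) by ring, b0]
    ring

lemma R2 (n : ℕ) : PowerSeries.coeff (R := ℤ) (2*n+3) (T^3) =
    -3 * PowerSeries.coeff (R := ℤ) (n+1) (T^3) - PowerSeries.coeff (R := ℤ) n (T^3) := by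
  rw [key, PowerSeries.coeff_mul_X_pow', PowerSeries.coeff_mul_X_pow',
    PowerSeries.coeff_mul_X_pow', if_pos (by omega : 1 ≤ 2*n+3),
    if_pos (by omega : 2 ≤ 2*n+3), if_pos (by omega : 3 ≤ 2*n+3),
    show 2*n+3 = 2*(n+1)+1 by ring, b1, show 2*(n+1)+1-1 = 2*(n+1) by omega, b0,
    show 2*(n+1)+1-2 = 2*n+1 by omega, b1, show 2*(n+1)+1-3 = 2*n by omega, b0]
  ring

lemma c0 : PowerSeries.coeff (R := ℤ) 0 (T^3) = 1 := by
  rw [show (T:PowerSeries ℤ)^3 = T*T*T by ring]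
  simp [PowerSeries.coeff_zero_eq_constantCoeff, T, t]

lemma c1 : PowerSeries.coeff (R := ℤ) 1 (T^3) = -3 := by
  rw [key, show (1:ℕ) = 2*0+1 by norm_num, b1, PowerSeries.coeff_mul_X_pow',
    PowerSeries.coeff_mul_X_pow', PowerSeries.coeff_mul_X_pow',
    if_pos (le_refl 1), if_neg (by omega), if_neg (by omega),
    show 2*0+1-1 = 2*0 by omega, b0]
  norm_num [c0]

lemma parity (n : ℕ) :
    (PowerSeries.coeff (R := ℤ) n (T^3)) % 2 = if n % 4 ≤ 1 then 1 else 0 := by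
  induction n using Nat.strong_induction_on with
  | _ n ih =>
    rcases n with _ | _ | m
    · rw [c0]; norm_num
    · rw [c1]; norm_num
    · rcases Nat.even_or_odd' m with ⟨k, hk | hk⟩
      · subst hk
        rw [show 2*k+2 = 2*k+2 from rfl, R1]
        have h1 := ih (k+1) (by omega)
        have h2 := ih k (by omega)
        split_ifs at h1 h2 ⊢ <;> omega
      · subst hk
        rw [show 2*k+1+2 = 2*k+3 by ring, R2]
        have h1 := ih (k+1) (by omega)
        have h2 := ih k (by omega)
        split_ifs at h1 h2 ⊢ <;> omega

lemma key1 (n : ℕ) : PowerSeries.coeff (R := ℤ) (4*n+3) (T^3) = 8 * PowerSeries.coeff (R := ℤ) n (T^3) := by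
  rcases n with _ | m
  · have h := R2 0
    norm_num [c1, c0] at h ⊢
    exact h
  · rw [show 4*(m+1)+3 = 2*(2*m+2)+3 by ring, R2, show 2*m+2+1 = 2*(m+1)+1 by ring,
      show (2*(m+1)+1 : ℕ) = 2*m+3 by ring, R2, show 2*m+2 = 2*m+2 from rfl, R1]
    ring

lemma key2 (n : ℕ) : PowerSeries.coeff (R := ℤ) (4*n+6) (T^3) = 8 * PowerSeries.coeff (R := ℤ) n (T^3) := by
  rw [show 4*n+6 = 2*(2*n+2)+2 by ring, R1, show 2*n+2+1 = 2*n+3 by ring, R2,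
    show 2*n+2 = 2*n+2 from rfl, R1]
  ring

lemma odd_emult {x : ℤ} (hx : Odd x) : emultiplicity (2:ℤ) x = 0 := by
  rw [emultiplicity_eq_zero]
  rw [Int.odd_iff] at hx
  rintro ⟨k, rfl⟩
  omega

lemma emult8 (x : ℤ) : emultiplicity (2:ℤ) (8*x) = 3 + emultiplicity (2:ℤ) x := by
  rw [show (8:ℤ) = 2^3 by norm_num, emultiplicity_mul Int.prime_two,
    emultiplicity_pow_self_of_prime Int.prime_two]
  rfl

lemma odd4n (n : ℕ) : Odd (PowerSeries.coeff (R := ℤ) (4*n) (T^3)) := by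
  rw [Int.odd_iff]
  have := parity (4*n)
  rwa [if_pos (by omega : (4*n) % 4 ≤ 1)] at this

lemma odd4n1 (n : ℕ) : Odd (PowerSeries.coeff (R := ℤ) (4*n+1) (T^3)) := by
  rw [Int.odd_iff]
  have := parity (4*n+1)
  rwa [if_pos (by omega : (4*n+1) % 4 ≤ 1)] at this

end PTMaux

theorem stmt6 (n : ℕ) :
    Odd (PowerSeries.coeff (R := ℤ) (4 * n) (T ^ 3)) ∧
    Odd (PowerSeries.coeff (R := ℤ) (4 * n + 1) (T ^ 3)) ∧
    emultiplicity (2 : ℤ) (PowerSeries.coeff (R := ℤ) (4 * n) (T ^ 3)) = 0 ∧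
    emultiplicity (2 : ℤ) (PowerSeries.coeff (R := ℤ) (4 * n + 1) (T ^ 3)) = 0 ∧
    emultiplicity (2 : ℤ) (PowerSeries.coeff (R := ℤ) (4 * n + 3) (T ^ 3)) =
      3 + emultiplicity (2 : ℤ) (PowerSeries.coeff (R := ℤ) n (T ^ 3)) ∧
    emultiplicity (2 : ℤ) (PowerSeries.coeff (R := ℤ) (4 * n + 6) (T ^ 3)) =
      3 + emultiplicity (2 : ℤ) (PowerSeries.coeff (R := ℤ) n (T ^ 3)) := by
  refine ⟨PTMaux.odd4n n, PTMaux.odd4n1 n, PTMaux.odd_emult (PTMaux.odd4n n),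
    PTMaux.odd_emult (PTMaux.odd4n1 n), ?_, ?_⟩
  · rw [PTMaux.key1 n, PTMaux.emult8]
  · rw [PTMaux.key2 n, PTMaux.emult8]
end

section
/- Let n ∈ ℕ₊ be written (uniquely) as n = Σ_{j=0}^{d} 4^j·a_j with a_j ∈ {0,1,3,6} for j < d and a_d ∈ {1,2,3,6}. Let k be the least index j with a_j ∉ {3,6} (and k = d+1 if all a_j ∈ {3,6}). Then: t_3(n) = 0 if and only if k = d and a_d = 2; and if t_3(n) ≠ 0, then ν₂(t_3(n)) = 3k. -/
namespace Stmt7Aux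

open PowerSeries Finset

/-- Thue–Morse sign. -/
def t (n : ℕ) : ℤ := (-1) ^ (Nat.digits 2 n).sum

lemma T_eq : T = PowerSeries.mk t := rfl

lemma t_zero : t 0 = 1 := by simp [t]

lemma t_even (m : ℕ) : t (2 * m) = t m := by
  rcases Nat.eq_zero_or_pos m with rfl | hm
  · rfl
  · rw [t, Nat.digits_def' (by norm_num : 1 < 2) (by omega : 0 < 2 * m)]
    simp [t, Nat.mul_div_cancel_left, Nat.mul_mod_right]

lemma t_odd (m : ℕ) : t (2 * m + 1) = - t m := by
  rw [t, Nat.digits_def' (by norm_num : 1 < 2) (by omega : 0 < 2 * m + 1)]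
  have h1 : (2 * m + 1) % 2 = 1 := by omega
  have h2 : (2 * m + 1) / 2 = m := by omega
  rw [h1, h2]
  simp [t, pow_succ, pow_add, mul_comm]

/-- even-supported version of a series -/
noncomputable def ev (f : ℕ → ℤ) : PowerSeries ℤ :=
  PowerSeries.mk fun n => if Even n then f (n / 2) else 0

lemma sum_even_half (m : ℕ) (h : ℕ → ℤ) :
    ∑ i ∈ range (2 * m + 1), (if Even i then h (i / 2) else 0) = ∑ j ∈ range (m + 1), h j := by
  induction m with
  | zero => simp
  | succ m ih =>
    have h1 : ¬ Even (2 * m + 1) := by rw [Nat.even_iff]; omega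
    have h2 : Even (2 * m + 1 + 1) := ⟨m + 1, by ring⟩
    have h3 : (2 * m + 1 + 1) / 2 = m + 1 := by omega
    have e1 : 2 * (m + 1) + 1 = (2 * m + 1) + 1 + 1 := by ring
    rw [e1, Finset.sum_range_succ (fun i => if Even i then h (i / 2) else 0) (2 * m + 1 + 1),
      Finset.sum_range_succ (fun i => if Even i then h (i / 2) else 0) (2 * m + 1), ih,
      if_neg h1, if_pos h2, h3, Finset.sum_range_succ h (m + 1)]
    ring

lemma ev_mul (f g : ℕ → ℤ) :
    ev f * ev g = ev (fun m => PowerSeries.coeff (R := ℤ) m (PowerSeries.mk f * PowerSeries.mk g)) := by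
  ext n
  rw [PowerSeries.coeff_mul, ev, ev, ev, PowerSeries.coeff_mk]
  rcases Nat.even_or_odd n with ⟨m, hm⟩ | ⟨m, hm⟩
  · subst hm
    have hev : Even (m + m) := ⟨m, rfl⟩
    rw [if_pos hev]
    have hhalf : (m + m) / 2 = m := by omega
    rw [hhalf, PowerSeries.coeff_mul,
      Finset.Nat.sum_antidiagonal_eq_sum_range_succ_mk,
      Finset.Nat.sum_antidiagonal_eq_sum_range_succ_mk]
    have hrw : ∀ i ∈ range (m + m + 1),
        (PowerSeries.coeff (R := ℤ) (i, m + m - i).1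
            (PowerSeries.mk fun j => if Even j then f (j / 2) else 0)) *
        (PowerSeries.coeff (R := ℤ) (i, m + m - i).2
            (PowerSeries.mk fun j => if Even j then g (j / 2) else 0)) =
        (if Even i then f (i / 2) * g (m - i / 2) else 0) := by
      intro i hi
      simp only [PowerSeries.coeff_mk]
      rcases Nat.even_or_odd i with hie | hio
      · rw [if_pos hie, if_pos hie]
        have hle : i ≤ m + m := Nat.lt_succ_iff.mp (Finset.mem_range.mp hi)
        obtain ⟨j, rfl⟩ := hie
        have hev2 : Even (m + m - (j + j)) := ⟨m - j, by omega⟩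
        rw [if_pos hev2]
        have e1 : (j + j) / 2 = j := by omega
        have e2 : (m + m - (j + j)) / 2 = m - j := by omega
        rw [e1, e2]
      · rw [if_neg (Nat.not_even_iff_odd.mpr hio)]
        rw [if_neg (Nat.not_even_iff_odd.mpr hio), zero_mul]
    rw [Finset.sum_congr rfl hrw]
    have e3 : m + m + 1 = 2 * m + 1 := by ring
    rw [e3, sum_even_half m (fun j => f j * g (m - j))]
    simp [PowerSeries.coeff_mk]
  · subst hm
    have hodd : ¬ Even (2 * m + 1) := by rw [Nat.even_iff]; omega
    rw [if_neg hodd, Finset.Nat.sum_antidiagonal_eq_sum_range_succ_mk]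
    apply Finset.sum_eq_zero
    intro i hi
    simp only [PowerSeries.coeff_mk]
    rcases Nat.even_or_odd i with hie | hio
    · have hle : i ≤ 2 * m + 1 := Nat.lt_succ_iff.mp (Finset.mem_range.mp hi)
      have : ¬ Even (2 * m + 1 - i) := by
        obtain ⟨j, rfl⟩ := hie
        rw [Nat.even_iff]; omega
      rw [if_neg this, mul_zero]
    · rw [if_neg (Nat.not_even_iff_odd.mpr hio), zero_mul]

lemma T_eq_ev : T = (1 - PowerSeries.X) * ev t := by
  ext n
  cases n with
  | zero =>
    rw [PowerSeries.coeff_zero_eq_constantCoeff_apply, PowerSeries.coeff_zero_eq_constantCoeff_apply,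
      map_mul, map_sub, map_one, PowerSeries.constantCoeff_X, T_eq, ev,
      PowerSeries.constantCoeff_mk, PowerSeries.constantCoeff_mk]
    simp [t_zero]
  | succ n =>
    rw [sub_mul, one_mul, map_sub, PowerSeries.coeff_succ_X_mul]
    rw [T_eq, PowerSeries.coeff_mk, ev, PowerSeries.coeff_mk, PowerSeries.coeff_mk]
    rcases Nat.even_or_odd (n + 1) with ⟨m, hm⟩ | ⟨m, hm⟩
    · have h1 : Even (n + 1) := ⟨m, hm⟩
      have h2 : ¬ Even n := by rw [Nat.even_iff] at *; omega
      rw [if_pos h1, if_neg h2, sub_zero]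
      have e1 : (n + 1) / 2 = m := by omega
      rw [e1, hm, show m + m = 2 * m by ring, t_even]
    · have h1 : ¬ Even (n + 1) := by rw [Nat.even_iff]; omega
      have h2 : Even n := by rw [Nat.even_iff] at *; omega
      rw [if_neg h1, if_pos h2, zero_sub]
      have e1 : n / 2 = m := by omega
      rw [e1, hm, t_odd]

lemma ev_cube : (ev t) ^ 3 = ev (fun m => PowerSeries.coeff (R := ℤ) m (T ^ 3)) := by
  have h2 : ev t * ev t = ev (fun m => PowerSeries.coeff (R := ℤ) m (T * T)) := by
    rw [ev_mul]; rfl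
  have h3 : (ev t) ^ 3 = (ev t * ev t) * ev t := by ring
  rw [h3, h2, ev_mul]
  congr 1
  funext m
  have h4 : PowerSeries.mk (fun j => PowerSeries.coeff (R := ℤ) j (T * T)) = T * T := by
    ext j; rw [PowerSeries.coeff_mk]
  rw [h4, ← T_eq]
  congr 1
  ring

lemma T_cube : T ^ 3 = ev (fun m => PowerSeries.coeff (R := ℤ) m (T ^ 3))
    - PowerSeries.C (R := ℤ) 3 * (PowerSeries.X ^ 1 * ev (fun m => PowerSeries.coeff (R := ℤ) m (T ^ 3)))
    + PowerSeries.C (R := ℤ) 3 * (PowerSeries.X ^ 2 * ev (fun m => PowerSeries.coeff (R := ℤ) m (T ^ 3)))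
    - PowerSeries.X ^ 3 * ev (fun m => PowerSeries.coeff (R := ℤ) m (T ^ 3)) := by
  conv_lhs => rw [T_eq_ev]
  have h2 : (PowerSeries.C (R := ℤ) 3 : PowerSeries ℤ) = 3 := map_ofNat (PowerSeries.C (R := ℤ)) 3
  rw [h2, ← ev_cube]
  ring

/-- abbreviation for the coefficients of `T^3` -/
noncomputable def c (n : ℕ) : ℤ := PowerSeries.coeff (R := ℤ) n (T ^ 3)

lemma c_expand (N : ℕ) :
    c N = (if Even N then c (N / 2) else 0)
      - 3 * (if 1 ≤ N then (if Even (N - 1) then c ((N - 1) / 2) else 0) else 0)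
      + 3 * (if 2 ≤ N then (if Even (N - 2) then c ((N - 2) / 2) else 0) else 0)
      - (if 3 ≤ N then (if Even (N - 3) then c ((N - 3) / 2) else 0) else 0) := by
  have h := congrArg (fun φ => PowerSeries.coeff (R := ℤ) N φ) T_cube
  simp only [map_sub, map_add, PowerSeries.coeff_C_mul] at h
  rw [PowerSeries.coeff_X_pow_mul', PowerSeries.coeff_X_pow_mul',
    PowerSeries.coeff_X_pow_mul'] at h
  rw [show PowerSeries.coeff (R := ℤ) N (ev fun m => PowerSeries.coeff (R := ℤ) m (T ^ 3))
      = (if Even N then c (N / 2) else 0) from by rw [ev, PowerSeries.coeff_mk]; rfl] at h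
  simp only [show ∀ M : ℕ, PowerSeries.coeff (R := ℤ) M (ev fun m => PowerSeries.coeff (R := ℤ) m (T ^ 3))
      = (if Even M then c (M / 2) else 0) from fun M => by rw [ev, PowerSeries.coeff_mk]; rfl] at h
  exact h

lemma c_zero : c 0 = 1 := by
  rw [c, PowerSeries.coeff_zero_eq_constantCoeff_apply, map_pow, T_eq,
    PowerSeries.constantCoeff_mk]
  rw [t_zero]
  norm_num

lemma c_one : c 1 = -3 := by
  have h := c_expand 1
  have hA : ¬ Even 1 := by rw [Nat.even_iff]; omega
  have hB : Even (1 - 1) := ⟨0, rfl⟩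
  rw [if_neg hA, if_pos (le_refl 1), if_pos hB,
    if_neg (by omega : ¬ 2 ≤ 1), if_neg (by omega : ¬ 3 ≤ 1)] at h
  simpa [c_zero] using h

lemma cE (n : ℕ) : c (2 * n + 2) = c (n + 1) + 3 * c n := by
  have h := c_expand (2 * n + 2)
  have h1 : ¬ Even (2 * n + 2 - 1) := by rw [Nat.even_iff]; omega
  have h2 : Even (2 * n + 2 - 2) := by rw [Nat.even_iff]; omega
  have h3 : (if 3 ≤ 2 * n + 2 then
      (if Even (2 * n + 2 - 3) then c ((2 * n + 2 - 3) / 2) else 0) else 0) = 0 := by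
    split_ifs with hc1 hc2
    · exfalso; rw [Nat.even_iff] at hc2; omega
    · rfl
    · rfl
  have hA : Even (2 * n + 2) := ⟨n + 1, by ring⟩
  rw [if_pos hA, if_pos (by omega : 1 ≤ 2 * n + 2),
    if_pos (by omega : 2 ≤ 2 * n + 2), if_neg h1, if_pos h2, h3,
    show (2 * n + 2) / 2 = n + 1 from by omega, show (2 * n + 2 - 2) / 2 = n from by omega] at h
  linarith [h]

lemma cO (n : ℕ) : c (2 * n + 3) = -3 * c (n + 1) - c n := by
  have h := c_expand (2 * n + 3)
  have h0 : ¬ Even (2 * n + 3) := by rw [Nat.even_iff]; omega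
  have h1 : Even (2 * n + 3 - 1) := by rw [Nat.even_iff]; omega
  have h2 : ¬ Even (2 * n + 3 - 2) := by rw [Nat.even_iff]; omega
  have h3 : Even (2 * n + 3 - 3) := by rw [Nat.even_iff]; omega
  rw [if_neg h0, if_pos (by omega : 1 ≤ 2 * n + 3), if_pos (by omega : 2 ≤ 2 * n + 3),
    if_pos (by omega : 3 ≤ 2 * n + 3), if_pos h1, if_neg h2, if_pos h3,
    show (2 * n + 3 - 1) / 2 = n + 1 from by omega,
    show (2 * n + 3 - 3) / 2 = n from by omega] at h
  linarith [h]

lemma c_two : c 2 = 0 := by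
  have h := cE 0
  norm_num [c_one, c_zero] at h
  exact h

lemma c_three : c 3 = 8 := by
  have h := cO 0
  norm_num [c_one, c_zero] at h
  exact h

lemma c_four : c 4 = -9 := by
  have h := cE 1
  norm_num [c_one, c_two] at h
  exact h

/-! ### The integer-indexed coefficient function -/

/-- `c` extended by zero to negative integers. -/
noncomputable def cz (z : ℤ) : ℤ := if 0 ≤ z then c z.toNat else 0

lemma cz_nat (n : ℕ) : cz n = c n := by simp [cz]

lemma cz_neg {z : ℤ} (h : z < 0) : cz z = 0 := by simp [cz, not_le.mpr h]

lemma czE (z : ℤ) : cz (2 * z) = cz z + 3 * cz (z - 1) := by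
  rcases lt_trichotomy z 0 with h | rfl | h
  · rw [cz_neg (by omega), cz_neg h, cz_neg (by omega)]; ring
  · rw [show (2 * 0 : ℤ) = ((0 : ℕ) : ℤ) from by norm_num, cz_nat,
      show (0 : ℤ) = ((0 : ℕ) : ℤ) from rfl, cz_nat, cz_neg (by norm_num)]
    ring
  · obtain ⟨n, rfl⟩ : ∃ n : ℕ, z = (n : ℤ) + 1 := ⟨(z - 1).toNat, by omega⟩
    rw [show (2 * ((n : ℤ) + 1)) = ((2 * n + 2 : ℕ) : ℤ) from by push_cast; ring,
      show ((n : ℤ) + 1 - 1) = ((n : ℕ) : ℤ) from by push_cast; ring,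
      show ((n : ℤ) + 1) = ((n + 1 : ℕ) : ℤ) from by push_cast; ring,
      cz_nat, cz_nat, cz_nat, cE]

lemma czO (z : ℤ) : cz (2 * z + 1) = -3 * cz z - cz (z - 1) := by
  rcases lt_trichotomy z 0 with h | rfl | h
  · rw [cz_neg (by omega), cz_neg h, cz_neg (by omega)]; ring
  · rw [show (2 * 0 + 1 : ℤ) = ((1 : ℕ) : ℤ) from by norm_num, cz_nat,
      show (0 : ℤ) = ((0 : ℕ) : ℤ) from rfl, cz_nat, cz_neg (by norm_num), c_one, c_zero]
    ring
  · obtain ⟨n, rfl⟩ : ∃ n : ℕ, z = (n : ℤ) + 1 := ⟨(z - 1).toNat, by omega⟩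
    rw [show (2 * ((n : ℤ) + 1) + 1) = ((2 * n + 3 : ℕ) : ℤ) from by push_cast; ring,
      show ((n : ℤ) + 1 - 1) = ((n : ℕ) : ℤ) from by push_cast; ring,
      show ((n : ℤ) + 1) = ((n + 1 : ℕ) : ℤ) from by push_cast; ring,
      cz_nat, cz_nat, cz_nat, cO]

lemma czR3 (z : ℤ) : cz (4 * z + 3) = 8 * cz z := by
  have h1 : cz (4 * z + 3) = -3 * cz (2 * z + 1) - cz (2 * z) := by
    have := czO (2 * z + 1)
    rw [show 2 * (2 * z + 1) + 1 = 4 * z + 3 from by ring,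
      show 2 * z + 1 - 1 = 2 * z from by ring] at this
    exact this
  rw [h1, czO, czE]; ring

lemma czR6 (z : ℤ) : cz (4 * z + 6) = 8 * cz z := by
  have h1 : cz (4 * z + 6) = cz (2 * z + 3) + 3 * cz (2 * z + 2) := by
    have := czE (2 * z + 3)
    rw [show 2 * (2 * z + 3) = 4 * z + 6 from by ring,
      show 2 * z + 3 - 1 = 2 * z + 2 from by ring] at this
    exact this
  have h2 : cz (2 * z + 3) = -3 * cz (z + 1) - cz z := by
    have := czO (z + 1)
    rw [show 2 * (z + 1) + 1 = 2 * z + 3 from by ring,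
      show z + 1 - 1 = z from by ring] at this
    exact this
  have h3 : cz (2 * z + 2) = cz (z + 1) + 3 * cz z := by
    have := czE (z + 1)
    rw [show 2 * (z + 1) = 2 * z + 2 from by ring,
      show z + 1 - 1 = z from by ring] at this
    exact this
  rw [h1, h2, h3]; ring

lemma cR3 (M : ℕ) : c (4 * M + 3) = 8 * c M := by
  have := czR3 (M : ℤ)
  rwa [show (4 * (M : ℤ) + 3) = ((4 * M + 3 : ℕ) : ℤ) from by push_cast; ring,
    cz_nat, cz_nat] at this

lemma cR6 (M : ℕ) : c (4 * M + 6) = 8 * c M := by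
  have := czR6 (M : ℤ)
  rwa [show (4 * (M : ℤ) + 6) = ((4 * M + 6 : ℕ) : ℤ) from by push_cast; ring,
    cz_nat, cz_nat] at this

/-! ### Parity facts -/

lemma czE2 (z : ℤ) : cz (2 * z) % 2 = (cz z + cz (z - 1)) % 2 := by
  rw [czE]; omega

lemma czO2 (z : ℤ) : cz (2 * z + 1) % 2 = (cz z + cz (z - 1)) % 2 := by
  rw [czO]; omega

/-- key parity lemma: for every `m ≥ 1`, exactly one of `c m`, `c (m-2)` is odd. -/
lemma parityD : ∀ m : ℕ, (cz (m + 1) + cz ((m : ℤ) - 1)) % 2 = 1 := by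
  intro m
  induction m using Nat.strong_induction_on with
  | _ m ih =>
    rcases Nat.lt_or_ge m 4 with h4 | h4
    · interval_cases m
      · rw [show ((0 : ℕ) : ℤ) + 1 = ((1 : ℕ) : ℤ) from by norm_num, cz_nat,
          cz_neg (by norm_num : ((0 : ℕ) : ℤ) - 1 < 0), c_one]
        decide
      · rw [show ((1 : ℕ) : ℤ) + 1 = ((2 : ℕ) : ℤ) from by norm_num, cz_nat,
          show ((1 : ℕ) : ℤ) - 1 = ((0 : ℕ) : ℤ) from by norm_num, cz_nat, c_zero, c_two]
        decide
      · rw [show ((2 : ℕ) : ℤ) + 1 = ((3 : ℕ) : ℤ) from by norm_num, cz_nat,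
          show ((2 : ℕ) : ℤ) - 1 = ((1 : ℕ) : ℤ) from by norm_num, cz_nat, c_three, c_one]
        decide
      · rw [show ((3 : ℕ) : ℤ) + 1 = ((4 : ℕ) : ℤ) from by norm_num, cz_nat,
          show ((3 : ℕ) : ℤ) - 1 = ((2 : ℕ) : ℤ) from by norm_num, cz_nat, c_four, c_two]
        decide
    · rcases Nat.even_or_odd (m + 1) with ⟨q, hq⟩ | ⟨q, hq⟩
      · -- m + 1 = 2q, q ≥ 3
        have key := ih (q - 1) (by omega)
        have hq1 : 1 ≤ q := by omega
        have eq1 : ((q - 1 : ℕ) : ℤ) + 1 = (q : ℤ) := by omega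
        have eq2 : ((q - 1 : ℕ) : ℤ) - 1 = (q : ℤ) - 2 := by omega
        rw [eq1, eq2] at key
        have a1 := czE2 (q : ℤ)
        have a2 := czE2 ((q : ℤ) - 1)
        rw [show (q : ℤ) - 1 - 1 = (q : ℤ) - 2 from by ring] at a2
        rw [show ((m : ℕ) : ℤ) + 1 = 2 * (q : ℤ) from by push_cast; omega,
          show ((m : ℕ) : ℤ) - 1 = 2 * ((q : ℤ) - 1) from by push_cast; omega]
        omega
      · -- m + 1 = 2q + 1, q ≥ 2
        have key := ih (q - 1) (by omega)
        have hq1 : 1 ≤ q := by omega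
        have eq1 : ((q - 1 : ℕ) : ℤ) + 1 = (q : ℤ) := by omega
        have eq2 : ((q - 1 : ℕ) : ℤ) - 1 = (q : ℤ) - 2 := by omega
        rw [eq1, eq2] at key
        have a1 := czO2 (q : ℤ)
        have a2 := czO2 ((q : ℤ) - 1)
        rw [show 2 * ((q : ℤ) - 1) + 1 = 2 * (q : ℤ) - 1 from by ring,
          show (q : ℤ) - 1 - 1 = (q : ℤ) - 2 from by ring] at a2
        rw [show ((m : ℕ) : ℤ) + 1 = 2 * (q : ℤ) + 1 from by push_cast; omega,
          show ((m : ℕ) : ℤ) - 1 = 2 * (q : ℤ) - 1 from by push_cast; omega]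
        omega

/-- for `m ≥ 1` and `r ∈ {0,1}`, `c (4m + r)` is odd. -/
lemma parityC (m : ℕ) (hm : 1 ≤ m) (r : ℕ) (hr : r = 0 ∨ r = 1) :
    c (4 * m + r) % 2 = 1 := by
  have hD := parityD (m - 1)
  have eq1 : ((m - 1 : ℕ) : ℤ) + 1 = (m : ℤ) := by push_cast; omega
  have eq2 : ((m - 1 : ℕ) : ℤ) - 1 = (m : ℤ) - 2 := by push_cast; omega
  rw [eq1, eq2] at hD
  have a1 := czE2 (m : ℤ)
  have a2 := czO2 ((m : ℤ) - 1)
  rw [show 2 * ((m : ℤ) - 1) + 1 = 2 * (m : ℤ) - 1 from by ring,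
    show (m : ℤ) - 1 - 1 = (m : ℤ) - 2 from by ring] at a2
  have hc : cz ((4 * m + r : ℕ) : ℤ) % 2 = 1 := by
    rcases hr with rfl | rfl
    · have b1 := czE2 (2 * (m : ℤ))
      rw [show 2 * (2 * (m : ℤ)) = ((4 * m + 0 : ℕ) : ℤ) from by push_cast; ring,
        show 2 * (m : ℤ) - 1 = 2 * (m : ℤ) - 1 from rfl] at b1
      omega
    · have b1 := czO2 (2 * (m : ℤ))
      rw [show 2 * (2 * (m : ℤ)) + 1 = ((4 * m + 1 : ℕ) : ℤ) from by push_cast; ring] at b1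
      omega
  rwa [cz_nat] at hc



lemma val_aux (i : ℕ) (u : ℤ) (hu : u ≠ 0) :
    padicValInt 2 ((8 : ℤ) ^ i * u) = 3 * i + padicValInt 2 u := by
  rw [padicValInt.mul (by positivity) hu]
  congr 1
  rw [show (8 : ℤ) = 2 ^ 3 from by norm_num, ← pow_mul]
  rw [padicValInt, show ((2 : ℤ) ^ (3 * i)).natAbs = 2 ^ (3 * i) from by
    rw [Int.natAbs_pow]; rfl]
  exact padicValNat.prime_pow (3 * i)

lemma odd_val {u : ℤ} (h : u % 2 = 1) : padicValInt 2 u = 0 :=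
  padicValInt.eq_zero_of_not_dvd (by omega)

lemma odd_ne_zero {u : ℤ} (h : u % 2 = 1) : u ≠ 0 := by omega

end Stmt7Aux

theorem stmt7 (n : ℕ) (hn : 1 ≤ n) (d : ℕ) (a : ℕ → ℕ)
    (hsum : n = ∑ j ∈ Finset.range (d + 1), 4 ^ j * a j)
    (hdig : ∀ j < d, a j = 0 ∨ a j = 1 ∨ a j = 3 ∨ a j = 6)
    (hlead : a d = 1 ∨ a d = 2 ∨ a d = 3 ∨ a d = 6)
    (k : ℕ) (hk : k ≤ d + 1)
    (hkleast : ∀ j < k, a j = 3 ∨ a j = 6)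
    (hknot : k ≤ d → ¬(a k = 3 ∨ a k = 6)) :
    (PowerSeries.coeff (R := ℤ) n (T ^ 3) = 0 ↔ k = d ∧ a d = 2) ∧
    (PowerSeries.coeff (R := ℤ) n (T ^ 3) ≠ 0 →
      padicValInt 2 (PowerSeries.coeff (R := ℤ) n (T ^ 3)) = 3 * k) := by
  open Stmt7Aux in
  have hcn : PowerSeries.coeff (R := ℤ) n (T ^ 3) = Stmt7Aux.c n := rfl
  rw [hcn]
  -- splitting off one digit
  have hsplit : ∀ i ≤ d, (∑ j ∈ Finset.range (d + 1 - i), 4 ^ j * a (j + i)) =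
      4 * (∑ j ∈ Finset.range (d + 1 - (i + 1)), 4 ^ j * a (j + (i + 1))) + a i := by
    intro i hid
    rw [show d + 1 - i = (d - i) + 1 from by omega, Finset.sum_range_succ']
    have hterm : ∀ j ∈ Finset.range (d - i), 4 ^ (j + 1) * a (j + 1 + i) =
        4 * (4 ^ j * a (j + (i + 1))) := by
      intro j _
      rw [show j + 1 + i = j + (i + 1) from by omega, pow_succ]
      ring
    rw [Finset.sum_congr rfl hterm, ← Finset.mul_sum, pow_zero, one_mul, zero_add,
      show d + 1 - (i + 1) = d - i from by omega]
  have key : ∀ i ≤ k,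
      Stmt7Aux.c n = 8 ^ i * Stmt7Aux.c (∑ j ∈ Finset.range (d + 1 - i), 4 ^ j * a (j + i)) := by
    intro i
    induction i with
    | zero =>
      intro _
      simp only [pow_zero, one_mul, Nat.sub_zero, Nat.add_zero]
      rw [← hsum]
    | succ i ih =>
      intro hik
      have hid : i ≤ d := by omega
      have h1 := ih (by omega)
      rw [h1, hsplit i hid]
      rcases hkleast i (by omega) with h3 | h6
      · rw [h3, Stmt7Aux.cR3]; ring
      · rw [h6, Stmt7Aux.cR6]; ring
  have hkey := key k le_rfl
  rcases Nat.lt_or_ge k (d + 1) with hkd | hkd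
  · -- k ≤ d
    have hkd' : k ≤ d := by omega
    have hak := hknot hkd'
    rcases Nat.eq_or_lt_of_le hkd' with hkdeq | hkdlt
    · -- k = d
      have hS : (∑ j ∈ Finset.range (d + 1 - k), 4 ^ j * a (j + k)) = a k := by
        rw [show d + 1 - k = 1 from by omega]
        simp
      rw [hS, show a k = a d from by rw [hkdeq]] at hkey
      rcases hlead with h | h | h | h
      · rw [h, Stmt7Aux.c_one] at hkey
        have hne : Stmt7Aux.c n ≠ 0 := by
          rw [hkey]; positivity
        constructor
        · constructor
          · intro h0; exact absurd h0 hne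
          · rintro ⟨-, h2⟩; omega
        · intro _
          rw [hkey, show (8 : ℤ) ^ k * (-3) = 8 ^ k * (-3) from rfl,
            Stmt7Aux.val_aux k (-3) (by norm_num)]
          rw [Stmt7Aux.odd_val (by norm_num : (-3 : ℤ) % 2 = 1)]
          omega
      · rw [h, Stmt7Aux.c_two, mul_zero] at hkey
        constructor
        · exact ⟨fun _ => ⟨hkdeq, h⟩, fun _ => hkey⟩
        · intro hne; exact absurd hkey hne
      · exact absurd (Or.inl (by rw [← hkdeq] at h; exact h)) hak
      · exact absurd (Or.inr (by rw [← hkdeq] at h; exact h)) hak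
    · -- k < d
      have hak01 : a k = 0 ∨ a k = 1 := by
        rcases hdig k hkdlt with h | h | h | h
        · exact Or.inl h
        · exact Or.inr h
        · exact absurd (Or.inl h) hak
        · exact absurd (Or.inr h) hak
      have hS := hsplit k hkd'
      set S' := ∑ j ∈ Finset.range (d + 1 - (k + 1)), 4 ^ j * a (j + (k + 1)) with hS'def
      have hS'pos : 1 ≤ S' := by
        have hmem : d - k - 1 ∈ Finset.range (d + 1 - (k + 1)) := by
          rw [Finset.mem_range]; omega
        have hle := Finset.single_le_sum
          (f := fun j => 4 ^ j * a (j + (k + 1))) (fun i _ => Nat.zero_le _) hmem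
        have had : 1 ≤ a d := by rcases hlead with h | h | h | h <;> omega
        have h1' : 1 ≤ 4 ^ (d - k - 1) * a (d - k - 1 + (k + 1)) := by
          rw [show d - k - 1 + (k + 1) = d from by omega]
          exact Nat.one_le_iff_ne_zero.mpr (Nat.mul_ne_zero (by positivity) (by omega))
        have hle' : 4 ^ (d - k - 1) * a (d - k - 1 + (k + 1)) ≤ S' := by
          rw [hS'def]; simpa using hle
        omega
      have hodd : Stmt7Aux.c (∑ j ∈ Finset.range (d + 1 - k), 4 ^ j * a (j + k)) % 2 = 1 := by
        rw [hS]
        exact Stmt7Aux.parityC S' hS'pos (a k) hak01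
      have hne : Stmt7Aux.c n ≠ 0 := by
        rw [hkey]
        exact mul_ne_zero (by positivity) (Stmt7Aux.odd_ne_zero hodd)
      constructor
      · constructor
        · intro h0; exact absurd h0 hne
        · rintro ⟨h1, -⟩; omega
      · intro _
        rw [hkey, Stmt7Aux.val_aux k _ (Stmt7Aux.odd_ne_zero hodd),
          Stmt7Aux.odd_val hodd]
        omega
  · -- k = d + 1
    have hkeq : k = d + 1 := by omega
    have hS : (∑ j ∈ Finset.range (d + 1 - k), 4 ^ j * a (j + k)) = 0 := by
      rw [hkeq]
      simp
    rw [hS, Stmt7Aux.c_zero, mul_one] at hkey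
    have hne : Stmt7Aux.c n ≠ 0 := by rw [hkey]; positivity
    constructor
    · constructor
      · intro h0; exact absurd h0 hne
      · rintro ⟨h1, -⟩; omega
    · intro _
      rw [hkey, show ((8 : ℤ) ^ k) = 8 ^ k * 1 from by ring,
        Stmt7Aux.val_aux k 1 one_ne_zero, padicValInt.one]
      omega
end

section
/- Let m ≥ 2. If the sequence (|t_m(n)|)_{n∈ℕ} is unbounded, then the sequence (t_m(n))_{n∈ℕ} is unbounded above and unbounded below; that is, for every C > 0 there exist n, n' with t_m(n) > C and t_m(n') < -C. -/
namespace PTMaux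

open PowerSeries Finset

/-- the operator `f(x) ↦ f(x^2)` -/
noncomputable def spread (f : PowerSeries ℤ) : PowerSeries ℤ :=
  PowerSeries.mk fun n => if Even n then PowerSeries.coeff (n / 2) f else 0

lemma coeff_spread (f : PowerSeries ℤ) (n : ℕ) :
    PowerSeries.coeff n (spread f) = if Even n then PowerSeries.coeff (n / 2) f else 0 := by
  simp [spread]

lemma sum_even_range (N : ℕ) (φ : ℕ → ℤ) :
    ∑ k ∈ range (2 * N + 1), (if Even k then φ (k / 2) else 0) = ∑ K ∈ range (N + 1), φ K := by
  induction N with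
  | zero => simp
  | succ n ih =>
      have h1 : 2 * (n + 1) + 1 = (2 * n + 1) + 1 + 1 := by ring
      rw [h1, Finset.sum_range_succ, Finset.sum_range_succ, ih, Finset.sum_range_succ,
        Finset.sum_range_succ]
      have h2 : ¬ Even (2 * n + 1) := by simp [Nat.even_add_one]
      have h3 : Even (2 * n + 1 + 1) := ⟨n + 1, by ring⟩
      have h4 : (2 * n + 1 + 1) / 2 = n + 1 := by omega
      simp [h2, h3, h4]
      exact (Finset.sum_range_succ φ n).symm

lemma spread_mul (f g : PowerSeries ℤ) : spread (f * g) = spread f * spread g := by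
  ext n
  rw [PowerSeries.coeff_mul, Finset.Nat.sum_antidiagonal_eq_sum_range_succ_mk]
  rcases Nat.even_or_odd n with he | ho
  · obtain ⟨N, rfl⟩ := he
    have hN : N + N = 2 * N := by ring
    rw [hN]
    have hcong : ∀ k ∈ range (2 * N + 1),
        PowerSeries.coeff k (spread f) * PowerSeries.coeff (2 * N - k) (spread g)
        = if Even k then
            (fun K => PowerSeries.coeff K f * PowerSeries.coeff (N - K) g) (k / 2)
          else 0 := by
      intro k hk
      rw [Finset.mem_range] at hk
      by_cases hek : Even k
      · obtain ⟨j, rfl⟩ := hek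
        have hev : Even (j + j) := ⟨j, rfl⟩
        have h5 : Even (2 * N - (j + j)) := ⟨N - j, by omega⟩
        have h6 : (2 * N - (j + j)) / 2 = N - j := by omega
        have h7 : (j + j) / 2 = j := by omega
        simp [coeff_spread, hev, h5, h6, h7]
      · simp [coeff_spread, hek]
    rw [Finset.sum_congr rfl hcong,
      sum_even_range N (fun K => PowerSeries.coeff K f * PowerSeries.coeff (N - K) g)]
    rw [coeff_spread]
    have h8 : Even (2 * N) := ⟨N, by ring⟩
    have h9 : 2 * N / 2 = N := by omega
    rw [if_pos h8, h9, PowerSeries.coeff_mul, Finset.Nat.sum_antidiagonal_eq_sum_range_succ_mk]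
  · obtain ⟨N, rfl⟩ := ho
    rw [coeff_spread]
    have ho2 : ¬ Even (2 * N + 1) := by simp [Nat.even_add_one]
    rw [if_neg ho2]
    refine (Finset.sum_eq_zero ?_).symm
    intro k hk
    rw [Finset.mem_range] at hk
    by_cases hek : Even k
    · have hne : ¬ Even (2 * N + 1 - k) := by
        rw [Nat.even_sub (by omega)]
        simp [hek, ho2]
      simp [coeff_spread, hne]
    · simp [coeff_spread, hek]

lemma spread_one : spread (1 : PowerSeries ℤ) = 1 := by
  ext n
  rw [coeff_spread]
  by_cases h0 : n = 0
  · subst h0; simp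
  · by_cases he : Even n
    · have hne : n / 2 ≠ 0 := by
        obtain ⟨j, rfl⟩ := he
        omega
      simp [he, hne, PowerSeries.coeff_one, h0]
    · simp [he, PowerSeries.coeff_one, h0]

lemma spread_pow (f : PowerSeries ℤ) (m : ℕ) : spread (f ^ m) = (spread f) ^ m := by
  induction m with
  | zero => simpa using spread_one
  | succ k ih => rw [pow_succ, pow_succ, spread_mul, ih]

lemma coeff_T_s9 (n : ℕ) : PowerSeries.coeff n T = (-1) ^ (Nat.digits 2 n).sum := by
  simp [T]

lemma coeff_T_two_mul (n : ℕ) :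
    PowerSeries.coeff (2 * n) T = PowerSeries.coeff n T := by
  rcases Nat.eq_zero_or_pos n with rfl | hn
  · norm_num
  · rw [coeff_T_s9, coeff_T_s9, Nat.digits_def' (by norm_num : (1:ℕ) < 2) (by omega)]
    have h1 : 2 * n % 2 = 0 := by omega
    have h2 : 2 * n / 2 = n := by omega
    rw [h1, h2]
    simp

lemma coeff_T_two_mul_add_one (n : ℕ) :
    PowerSeries.coeff (2 * n + 1) T = -PowerSeries.coeff n T := by
  rw [coeff_T_s9, coeff_T_s9, Nat.digits_def' (by norm_num : (1:ℕ) < 2) (by omega)]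
  have h1 : (2 * n + 1) % 2 = 1 := by omega
  have h2 : (2 * n + 1) / 2 = n := by omega
  rw [h1, h2]
  simp [pow_succ, pow_add]

lemma T_eq : T = (1 - PowerSeries.X) * spread T := by
  ext n
  have hXmul : PowerSeries.coeff n ((1 - PowerSeries.X) * spread T)
      = PowerSeries.coeff n (spread T)
        - PowerSeries.coeff n (PowerSeries.X * spread T) := by
    rw [sub_mul, one_mul, map_sub]
  rw [hXmul]
  rcases Nat.eq_zero_or_pos n with rfl | hn
  · simp [coeff_spread, T]
  · have hx : PowerSeries.coeff n (PowerSeries.X * spread T)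
        = PowerSeries.coeff (n - 1) (spread T) := by
      have hX1 : (PowerSeries.X : PowerSeries ℤ) * spread T
          = PowerSeries.X ^ 1 * spread T := by rw [pow_one]
      rw [hX1, PowerSeries.coeff_X_pow_mul', if_pos (by omega : 1 ≤ n)]
    rw [hx]
    rcases Nat.even_or_odd n with he | ho
    · obtain ⟨N, rfl⟩ := he
      have hN : N + N = 2 * N := by ring
      have h1 : Even (2 * N) := ⟨N, by ring⟩
      rw [hN] at hn ⊢
      have h2 : ¬ Even (2 * N - 1) := by
        rw [Nat.even_sub (by omega)]
        simp [h1]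
      rw [coeff_spread, coeff_spread, if_pos h1, if_neg ?hodd, sub_zero]
      case hodd => exact h2
      have h3 : 2 * N / 2 = N := by omega
      rw [h3, coeff_T_two_mul]
    · obtain ⟨N, rfl⟩ := ho
      have h1 : ¬ Even (2 * N + 1) := by simp [Nat.even_add_one]
      have h2 : Even (2 * N + 1 - 1) := ⟨N, by omega⟩
      rw [coeff_spread, coeff_spread, if_neg h1, if_pos h2]
      have h3 : (2 * N + 1 - 1) / 2 = N := by omega
      rw [h3, coeff_T_two_mul_add_one]
      ring

lemma T_pow_eq (m : ℕ) :
    T ^ m = (1 - PowerSeries.X) ^ m * spread (T ^ m) := by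
  rw [spread_pow]
  conv_lhs => rw [T_eq]
  rw [mul_pow]

/-- the key coefficient identity -/
lemma key_s9 (m N : ℕ) :
    PowerSeries.coeff N (T ^ m)
      = ∑ j ∈ range (m + 1), (-1 : ℤ) ^ j * (m.choose j) *
          (if j ≤ N ∧ Even (N - j) then PowerSeries.coeff ((N - j) / 2) (T ^ m) else 0) := by
  have hexp : (1 - PowerSeries.X : PowerSeries ℤ) ^ m
      = ∑ j ∈ range (m + 1),
          ((-1 : ℤ) ^ j * (m.choose j : ℤ)) • ((PowerSeries.X : PowerSeries ℤ) ^ j) := by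
    rw [sub_eq_neg_add, add_pow]
    refine Finset.sum_congr rfl fun j hj => ?_
    rw [neg_pow, zsmul_eq_mul]
    push_cast
    ring
  conv_lhs => rw [T_pow_eq m]
  rw [hexp, Finset.sum_mul, map_sum]
  refine Finset.sum_congr rfl fun j hj => ?_
  rw [smul_mul_assoc, map_smul, smul_eq_mul, PowerSeries.coeff_X_pow_mul', coeff_spread]
  by_cases hle : j ≤ N
  · by_cases hev : Even (N - j)
    · rw [if_pos hle, if_pos hev, if_pos ⟨hle, hev⟩]
    · rw [if_pos hle, if_neg hev, if_neg (by tauto)]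
  · rw [if_neg hle, if_neg (by tauto)]

/-- The arithmetic heart: a sequence satisfying the key identity that is bounded above
is bounded below. -/
lemma arith (m : ℕ) (hm : 2 ≤ m) (a : ℕ → ℤ)
    (hid : ∀ N, a N = ∑ j ∈ range (m + 1), (-1 : ℤ) ^ j * (m.choose j) *
          (if j ≤ N ∧ Even (N - j) then a ((N - j) / 2) else 0))
    (C : ℤ) (hCpos : 0 < C) (hub : ∀ k, a k ≤ C) :
    ∀ k, -(2 ^ m * C) ≤ a k := by
  by_contra hcon
  push_neg at hcon
  obtain ⟨ν, hν⟩ := hcon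
  set N := 2 * ν + 1 with hNdef
  have h1mem : (1 : ℕ) ∈ range (m + 1) := by
    rw [Finset.mem_range]; omega
  have hkey := hid N
  rw [← Finset.add_sum_erase _ _ h1mem] at hkey
  have hterm1 : (-1 : ℤ) ^ 1 * (m.choose 1) *
      (if 1 ≤ N ∧ Even (N - 1) then a ((N - 1) / 2) else 0) = -((m : ℤ) * a ν) := by
    have hc : 1 ≤ N ∧ Even (N - 1) := ⟨by omega, ⟨ν, by omega⟩⟩
    rw [if_pos hc]
    have hq : (N - 1) / 2 = ν := by omega
    rw [hq, Nat.choose_one_right]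
    ring
  rw [hterm1] at hkey
  have hrest : ∀ j ∈ (range (m + 1)).erase 1,
      -((m.choose j : ℤ) * C) ≤ (-1 : ℤ) ^ j * (m.choose j) *
        (if j ≤ N ∧ Even (N - j) then a ((N - j) / 2) else 0) := by
    intro j hj
    have hc0 : (0 : ℤ) ≤ (m.choose j : ℤ) := by positivity
    by_cases hc : j ≤ N ∧ Even (N - j)
    · have hodd : Odd j := by
        rcases Nat.even_or_odd j with hje | hjo
        · exfalso
          obtain ⟨u, hu⟩ := hc.2
          obtain ⟨v, hv⟩ := hje
          omega
        · exact hjo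
      rw [if_pos hc, hodd.neg_one_pow]
      have hmul := mul_le_mul_of_nonneg_left (hub ((N - j) / 2)) hc0
      linarith
    · rw [if_neg hc, mul_zero]
      have : (0 : ℤ) ≤ (m.choose j : ℤ) * C := mul_nonneg hc0 hCpos.le
      linarith
  have hsumrest : -((2 : ℤ) ^ m * C) ≤
      ∑ j ∈ (range (m + 1)).erase 1, (-1 : ℤ) ^ j * (m.choose j) *
        (if j ≤ N ∧ Even (N - j) then a ((N - j) / 2) else 0) := by
    have h1 := Finset.sum_le_sum hrest
    have hsub : (∑ j ∈ (range (m + 1)).erase 1, (m.choose j : ℤ)) ≤ 2 ^ m := by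
      have hn : (∑ j ∈ (range (m + 1)).erase 1, m.choose j) ≤ 2 ^ m := by
        calc (∑ j ∈ (range (m + 1)).erase 1, m.choose j)
            ≤ ∑ j ∈ range (m + 1), m.choose j :=
              Finset.sum_le_sum_of_subset (Finset.erase_subset _ _)
          _ = 2 ^ m := Nat.sum_range_choose m
      exact_mod_cast hn
    have heq : (∑ j ∈ (range (m + 1)).erase 1, -((m.choose j : ℤ) * C))
        = -((∑ j ∈ (range (m + 1)).erase 1, (m.choose j : ℤ)) * C) := by
      simp only [← neg_mul]
      rw [← Finset.sum_mul, Finset.sum_neg_distrib, neg_mul]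
    have h2 : -((2 : ℤ) ^ m * C) ≤ ∑ j ∈ (range (m + 1)).erase 1, -((m.choose j : ℤ) * C) := by
      rw [heq]
      have := mul_le_mul_of_nonneg_right hsub hCpos.le
      linarith
    linarith
  -- now derive the contradiction
  have hM : (2 : ℤ) ≤ (m : ℤ) := by exact_mod_cast hm
  have hM0 : (0 : ℤ) < (m : ℤ) := by linarith
  have hP : (1 : ℤ) ≤ 2 ^ m := one_le_pow₀ (by norm_num)
  have hprod := mul_lt_mul_of_pos_left hν hM0
  have hNub := hub N
  nlinarith [mul_pos (show (0:ℤ) < 2 ^ m by linarith) hCpos]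

end PTMaux

theorem stmt9 (m : ℕ) (hm : 2 ≤ m)
    (h : ∀ C : ℤ, ∃ n : ℕ, C < |PowerSeries.coeff n (T ^ m)|) :
    ∀ C : ℤ, 0 < C →
      (∃ n : ℕ, C < PowerSeries.coeff n (T ^ m)) ∧
      ∃ n' : ℕ, PowerSeries.coeff n' (T ^ m) < -C := by
  classical
  set a : ℕ → ℤ := fun n => PowerSeries.coeff n (T ^ m) with ha
  have hid : ∀ N, a N = ∑ j ∈ Finset.range (m + 1), (-1 : ℤ) ^ j * (m.choose j) *
      (if j ≤ N ∧ Even (N - j) then a ((N - j) / 2) else 0) := fun N => PTMaux.key_s9 m N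
  have hidneg : ∀ N, (-a N) = ∑ j ∈ Finset.range (m + 1), (-1 : ℤ) ^ j * (m.choose j) *
      (if j ≤ N ∧ Even (N - j) then -a ((N - j) / 2) else 0) := by
    intro N
    rw [hid N, ← Finset.sum_neg_distrib]
    refine Finset.sum_congr rfl fun j hj => ?_
    by_cases hc : j ≤ N ∧ Even (N - j)
    · rw [if_pos hc, if_pos hc]; ring
    · rw [if_neg hc, if_neg hc]; ring
  have hP : (1 : ℤ) ≤ 2 ^ m := one_le_pow₀ (by norm_num)
  intro C hC
  constructor
  · by_contra hno
    push_neg at hno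
    have hlb := PTMaux.arith m hm a hid C hC hno
    obtain ⟨n, hn⟩ := h (2 ^ m * C)
    have h1 : a n ≤ C := hno n
    have h2 : -(2 ^ m * C) ≤ a n := hlb n
    have : |a n| ≤ 2 ^ m * C := abs_le.mpr ⟨h2, by nlinarith⟩
    exact absurd hn (not_lt.mpr this)
  · by_contra hno
    push_neg at hno
    have hub' : ∀ k, (-a) k ≤ C := fun k => by
      have := hno k
      simp only [Pi.neg_apply]
      linarith
    have hlb := PTMaux.arith m hm (-a) (by
      intro N
      simpa using hidneg N) C hC hub'
    obtain ⟨n, hn⟩ := h (2 ^ m * C)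
    have h1 : -C ≤ a n := hno n
    have h2 : a n ≤ 2 ^ m * C := by
      have := hlb n
      simp only [Pi.neg_apply] at this
      linarith
    have : |a n| ≤ 2 ^ m * C := abs_le.mpr ⟨by nlinarith, h2⟩
    exact absurd hn (not_lt.mpr this)
end

section
/- For every integer k ≥ 3: max{t_2(n) : 0 ≤ n ≤ 2^k} = 2^{2⌊k/2⌋} = t_2(2^{2⌊k/2⌋} - 1) and min{t_2(n) : 0 ≤ n ≤ 2^k} = -2^{2⌊(k-1)/2⌋+1} = t_2(2^{2⌊(k-1)/2⌋+1} - 1). -/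
def a (n : ℕ) : ℤ := (-1) ^ (Nat.digits 2 n).sum

def t (n : ℕ) : ℤ := ∑ i ∈ Finset.range (n + 1), a i * a (n - i)

lemma coeff_T2 (n : ℕ) : PowerSeries.coeff n (T ^ 2) = t n := by
  rw [sq, PowerSeries.coeff_mul, Finset.Nat.sum_antidiagonal_eq_sum_range_succ_mk]
  simp [T, a, t]

lemma a_zero : a 0 = 1 := by simp [a]

lemma a_two_mul (n : ℕ) : a (2 * n) = a n := by
  rcases Nat.eq_zero_or_pos n with h | h
  · simp [h]
  · rw [a, Nat.digits_def' (by norm_num) (by omega)]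
    simp [a, Nat.mul_div_cancel_left _ (by norm_num : 0 < 2)]

lemma a_odd (n : ℕ) : a (2 * n + 1) = -a n := by
  rw [a, Nat.digits_def' (by norm_num) (by omega)]
  have h1 : (2 * n + 1) % 2 = 1 := by omega
  have h2 : (2 * n + 1) / 2 = n := by omega
  rw [h1, h2]
  simp [a, pow_add, pow_succ]

lemma sum_split (m : ℕ) (f : ℕ → ℤ) :
    ∑ i ∈ Finset.range (2 * m), f i =
      ∑ i ∈ Finset.range m, f (2 * i) + ∑ i ∈ Finset.range m, f (2 * i + 1) := by
  induction m with
  | zero => simp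
  | succ m ih =>
      have : 2 * (m + 1) = (2 * m + 1) + 1 := by ring
      rw [this, Finset.sum_range_succ, Finset.sum_range_succ, ih,
        Finset.sum_range_succ, Finset.sum_range_succ]
      ring

lemma t_odd (n : ℕ) : t (2 * n + 1) = -2 * t n := by
  have h : 2 * n + 1 + 1 = 2 * (n + 1) := by ring
  rw [t, h, sum_split]
  have h1 : ∀ p ∈ Finset.range (n + 1), a (2 * p) * a (2 * n + 1 - 2 * p)
      = -(a p * a (n - p)) := by
    intro p hp
    simp only [Finset.mem_range] at hp
    have : 2 * n + 1 - 2 * p = 2 * (n - p) + 1 := by omega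
    rw [this, a_two_mul, a_odd]; ring
  have h2 : ∀ p ∈ Finset.range (n + 1), a (2 * p + 1) * a (2 * n + 1 - (2 * p + 1))
      = -(a p * a (n - p)) := by
    intro p hp
    simp only [Finset.mem_range] at hp
    have : 2 * n + 1 - (2 * p + 1) = 2 * (n - p) := by omega
    rw [this, a_two_mul, a_odd]; ring
  rw [Finset.sum_congr rfl h1, Finset.sum_congr rfl h2, t, Finset.sum_neg_distrib]
  ring

lemma t_even (n : ℕ) : t (2 * n + 2) = t (n + 1) + t n := by
  have h : 2 * n + 2 + 1 = 2 * (n + 1) + 1 := by ring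
  rw [t, h, Finset.sum_range_succ, sum_split]
  have h1 : ∀ p ∈ Finset.range (n + 1), a (2 * p) * a (2 * n + 2 - 2 * p)
      = a p * a (n + 1 - p) := by
    intro p hp
    simp only [Finset.mem_range] at hp
    have : 2 * n + 2 - 2 * p = 2 * (n + 1 - p) := by omega
    rw [this, a_two_mul, a_two_mul]
  have h2 : ∀ p ∈ Finset.range (n + 1), a (2 * p + 1) * a (2 * n + 2 - (2 * p + 1))
      = a p * a (n - p) := by
    intro p hp
    simp only [Finset.mem_range] at hp
    have : 2 * n + 2 - (2 * p + 1) = 2 * (n - p) + 1 := by omega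
    rw [this, a_odd, a_odd]; ring
  rw [Finset.sum_congr rfl h1, Finset.sum_congr rfl h2]
  have h3 : 2 * n + 2 - 2 * (n + 1) = 0 := by omega
  have h4 : a (2 * (n + 1)) * a (2 * n + 2 - 2 * (n + 1)) = a (n + 1) * a (n + 1 - (n + 1)) := by
    rw [h3, a_two_mul, Nat.sub_self]
  rw [h4]
  have : t (n + 1) = ∑ p ∈ Finset.range (n + 1), a p * a (n + 1 - p)
      + a (n + 1) * a (n + 1 - (n + 1)) := by
    rw [t, Finset.sum_range_succ]
  rw [this, t]
  ring

lemma t_zero : t 0 = 1 := by simp [t, a_zero]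
lemma t_one : t 1 = -2 := by have := t_odd 0; rw [t_zero] at this; norm_num at this; simpa using this
lemma t_two : t 2 = -1 := by have := t_even 0; rw [t_zero, t_one] at this; norm_num at this; simpa using this
lemma t_three : t 3 = 4 := by have := t_odd 1; rw [t_one] at this; norm_num at this; simpa using this
lemma t_four : t 4 = -3 := by have := t_even 1; rw [t_two, t_one] at this; norm_num at this; simpa using this

lemma t_five : t 5 = 2 := by have := t_odd 2; rw [t_two] at this; norm_num at this; simpa using this
lemma t_six : t 6 = 3 := by have := t_even 2; rw [t_three, t_two] at this; norm_num at this; simpa using this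
lemma t_seven : t 7 = -8 := by have := t_odd 3; rw [t_three] at this; norm_num at this; simpa using this
lemma t_eight : t 8 = 1 := by have := t_even 3; rw [t_four, t_three] at this; norm_num at this; simpa using this

lemma t_two_mul_eq (m : ℕ) (hm : 2 ≤ m) :
    ∃ i, 1 ≤ i ∧ 2 * i ≤ m + 1 ∧
      (t (2 * m) = t i - t (i - 1) ∨ t (2 * m) = t (i - 1) - t i) := by
  have h1 : 2 * m = 2 * (m - 1) + 2 := by omega
  have h2 : m - 1 + 1 = m := by omega
  have hm' : t (2 * m) = t m + t (m - 1) := by rw [h1, t_even, h2]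
  rcases Nat.even_or_odd m with ⟨i, hi⟩ | ⟨i, hi⟩
  · -- m = 2 i
    have hi' : m = 2 * i := by omega
    have hi1 : 1 ≤ i := by omega
    refine ⟨i, hi1, by omega, Or.inl ?_⟩
    have e1 : m = 2 * (i - 1) + 2 := by omega
    have e2 : m - 1 = 2 * (i - 1) + 1 := by omega
    have e3 : i - 1 + 1 = i := by omega
    rw [hm', e2, e1, t_even, t_odd, e3]
    ring
  · -- m = 2 i + 1
    have hi' : m = 2 * i + 1 := by omega
    have hi1 : 1 ≤ i := by omega
    refine ⟨i, hi1, by omega, Or.inr ?_⟩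
    have e2 : m - 1 = 2 * (i - 1) + 2 := by omega
    have e3 : i - 1 + 1 = i := by omega
    rw [hm', e2, hi', t_odd, t_even, e3]
    ring

lemma t_two_mul_bound (c m : ℕ) (hm : 2 ≤ m) (hm2 : m ≤ 2 * 2 ^ c)
    (habs : ∀ j ≤ 2 ^ c, |t j| ≤ 2 ^ c) : |t (2 * m)| ≤ 2 ^ (c + 1) := by
  obtain ⟨i, hi1, hi2, heq⟩ := t_two_mul_eq m hm
  have hic : i ≤ 2 ^ c := by omega
  have h1 : |t i| ≤ 2 ^ c := habs i hic
  have h2 : |t (i - 1)| ≤ 2 ^ c := habs (i - 1) (by omega)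
  have key : |t i - t (i - 1)| ≤ 2 ^ (c + 1) := by
    calc |t i - t (i - 1)| ≤ |t i| + |t (i - 1)| := abs_sub _ _
    _ ≤ 2 ^ c + 2 ^ c := by linarith
    _ = 2 ^ (c + 1) := by ring
  rcases heq with h | h
  · rw [h]; exact key
  · rw [h, ← abs_neg]; simpa using key

lemma t_abs : ∀ k : ℕ, ∀ n ≤ 2 ^ (k + 1), |t n| ≤ 2 ^ (k + 1) := by
  intro k
  induction k using Nat.strong_induction_on with
  | _ k ih =>
    intro n hn
    match k, ih with
    | 0, _ =>
      interval_cases n <;> simp [t_zero, t_one, t_two]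
    | 1, _ =>
      interval_cases n <;> simp [t_zero, t_one, t_two, t_three, t_four] <;> norm_num
    | (k + 2), ih =>
      rcases Nat.even_or_odd n with ⟨j, hj⟩ | ⟨j, hj⟩
      · -- n = 2 j
        have hjn : n = 2 * j := by omega
        rcases Nat.lt_or_ge j 2 with hj2 | hj2
        · interval_cases j <;>
            simp_all [t_zero, t_one, t_two] <;>
            exact_mod_cast Nat.one_le_two_pow
        · have hp : n ≤ 2 * (2 * 2 ^ (k + 1)) := by
            calc n ≤ 2 ^ (k + 2 + 1) := hn
            _ = 2 * (2 * 2 ^ (k + 1)) := by ring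
          have hj3 : j ≤ 2 * 2 ^ (k + 1) := by omega
          have habs : ∀ m ≤ 2 ^ (k + 1), |t m| ≤ 2 ^ (k + 1) :=
            fun m hm => ih k (by omega) m hm
          have := t_two_mul_bound (k + 1) j hj2 hj3 habs
          rw [hjn]
          calc |t (2 * j)| ≤ 2 ^ (k + 1 + 1) := this
          _ ≤ 2 ^ (k + 2 + 1) := by
              have : (0:ℤ) < 2 ^ (k + 1 + 1) := by positivity
              calc (2:ℤ) ^ (k + 1 + 1) ≤ 2 * 2 ^ (k + 1 + 1) := by linarith
              _ = 2 ^ (k + 2 + 1) := by ring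
      · -- n = 2 j + 1
        have hjn : n = 2 * j + 1 := by omega
        have hp : n ≤ 2 * 2 ^ (k + 1 + 1) := by
          calc n ≤ 2 ^ (k + 2 + 1) := hn
          _ = 2 * 2 ^ (k + 1 + 1) := by ring
        have h1 : |t j| ≤ 2 ^ (k + 1 + 1) := ih (k + 1) (by omega) j (by omega)
        rw [hjn, t_odd, abs_mul]
        have : |(-2 : ℤ)| = 2 := by norm_num
        rw [this]
        have h2 : |t j| ≤ 2 ^ (k + 1 + 1) := h1
        calc 2 * |t j| ≤ 2 * 2 ^ (k + 1 + 1) := by linarith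
        _ = 2 ^ (k + 2 + 1) := by ring

lemma t_pow (m : ℕ) : t (2 ^ m - 1) = (-2) ^ m := by
  induction m with
  | zero => simpa using t_zero
  | succ m ih =>
      have h : 2 ^ (m + 1) - 1 = 2 * (2 ^ m - 1) + 1 := by
        have := Nat.one_le_two_pow (n := m); omega
      rw [h, t_odd, ih]
      ring

lemma t_bounds (k : ℕ) (hk : 3 ≤ k) : ∀ n ≤ 2 ^ k,
    -2 ^ (2 * ((k - 1) / 2) + 1) ≤ t n ∧ t n ≤ 2 ^ (2 * (k / 2)) := by
  induction k, hk using Nat.le_induction with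
  | base =>
      intro n hn
      norm_num at hn ⊢
      interval_cases n <;>
        simp [t_zero, t_one, t_two, t_three, t_four, t_five, t_six, t_seven, t_eight] <;>
        norm_num
  | succ k hk ih =>
      intro n hn
      have hone : (1 : ℤ) ≤ 2 ^ (2 * ((k + 1) / 2)) := by exact_mod_cast Nat.one_le_two_pow
      have honeb : (1 : ℤ) ≤ 2 ^ (2 * ((k + 1 - 1) / 2) + 1) := by exact_mod_cast Nat.one_le_two_pow
      rcases Nat.even_or_odd n with ⟨j, hj⟩ | ⟨j, hj⟩
      · -- n = 2 j even
        have hjn : n = 2 * j := by omega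
        rcases Nat.lt_or_ge j 2 with hj2 | hj2
        · -- n ∈ {0, 2}
          interval_cases j <;> simp_all [t_zero, t_two] <;>
            first
            | (constructor <;> linarith)
            | linarith
        · have hp : n ≤ 2 * (2 * 2 ^ (k - 1)) := by
            calc n ≤ 2 ^ (k + 1) := hn
            _ = 2 * (2 * 2 ^ (k - 1)) := by
                rw [← pow_succ', ← pow_succ']; congr 1; omega
          have hj3 : j ≤ 2 * 2 ^ (k - 1) := by omega
          have habs : ∀ m ≤ 2 ^ (k - 1), |t m| ≤ 2 ^ (k - 1) := by
            intro m hm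
            have e : k - 1 = (k - 2) + 1 := by omega
            rw [e] at hm ⊢
            exact t_abs (k - 2) m hm
          have hb := t_two_mul_bound (k - 1) j hj2 hj3 habs
          rw [abs_le] at hb
          have ek : (2 : ℤ) ^ (k - 1 + 1) = 2 ^ k := by congr 1; omega
          rw [ek] at hb
          have hA : (2 : ℤ) ^ k ≤ 2 ^ (2 * ((k + 1) / 2)) :=
            pow_le_pow_right₀ (by norm_num) (by omega)
          have hB : (2 : ℤ) ^ k ≤ 2 ^ (2 * ((k + 1 - 1) / 2) + 1) :=
            pow_le_pow_right₀ (by norm_num) (by omega)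
          rw [hjn]
          constructor <;> linarith [hb.1, hb.2]
      · -- n = 2 j + 1 odd
        have hjn : n = 2 * j + 1 := by omega
        have hp : n ≤ 2 * 2 ^ k := by
          calc n ≤ 2 ^ (k + 1) := hn
          _ = 2 * 2 ^ k := by ring
        have hj2 : j ≤ 2 ^ k := by omega
        obtain ⟨hlow, hhigh⟩ := ih j hj2
        rw [hjn, t_odd]
        have eA : (2 : ℤ) ^ (2 * ((k - 1) / 2) + 1 + 1) = 2 ^ (2 * ((k + 1) / 2)) := by
          congr 1; omega
        have eB : (2 : ℤ) ^ (2 * (k / 2) + 1) = 2 ^ (2 * ((k + 1 - 1) / 2) + 1) := by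
          norm_num
        constructor
        · -- lower bound : -2 * t j ≥ -2 ^ (2*(k/2)+1)
          rw [← eB]
          have : (2 : ℤ) ^ (2 * (k / 2) + 1) = 2 * 2 ^ (2 * (k / 2)) := by ring
          rw [this]
          linarith
        · rw [← eA]
          have : (2 : ℤ) ^ (2 * ((k - 1) / 2) + 1 + 1) = 2 * 2 ^ (2 * ((k - 1) / 2) + 1) := by
            ring
          rw [this]
          linarith

lemma t_max_attained (k : ℕ) : t (2 ^ (2 * (k / 2)) - 1) = 2 ^ (2 * (k / 2)) := by
  rw [t_pow, Even.neg_pow (even_two_mul _)]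

lemma t_min_attained (k : ℕ) :
    t (2 ^ (2 * ((k - 1) / 2) + 1) - 1) = -2 ^ (2 * ((k - 1) / 2) + 1) := by
  rw [t_pow, Odd.neg_pow ⟨(k - 1) / 2, by omega⟩]

theorem stmt10 (k : ℕ) (hk : 3 ≤ k) :
    IsGreatest {x : ℤ | ∃ n : ℕ, n ≤ 2 ^ k ∧ PowerSeries.coeff n (T ^ 2) = x}
        (2 ^ (2 * (k / 2))) ∧
    PowerSeries.coeff (2 ^ (2 * (k / 2)) - 1) (T ^ 2) = 2 ^ (2 * (k / 2)) ∧
    IsLeast {x : ℤ | ∃ n : ℕ, n ≤ 2 ^ k ∧ PowerSeries.coeff n (T ^ 2) = x}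
        (-2 ^ (2 * ((k - 1) / 2) + 1)) ∧
    PowerSeries.coeff (2 ^ (2 * ((k - 1) / 2) + 1) - 1) (T ^ 2) =
      -2 ^ (2 * ((k - 1) / 2) + 1) := by
  have hmax : (2 : ℕ) ^ (2 * (k / 2)) ≤ 2 ^ k := Nat.pow_le_pow_right (by norm_num) (by omega)
  have hmin : (2 : ℕ) ^ (2 * ((k - 1) / 2) + 1) ≤ 2 ^ k :=
    Nat.pow_le_pow_right (by norm_num) (by omega)
  have h1 : 1 ≤ (2:ℕ) ^ (2 * (k / 2)) := Nat.one_le_two_pow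
  have h2 : 1 ≤ (2:ℕ) ^ (2 * ((k - 1) / 2) + 1) := Nat.one_le_two_pow
  refine ⟨⟨⟨2 ^ (2 * (k / 2)) - 1, by omega, by rw [coeff_T2, t_max_attained]⟩, ?_⟩,
    by rw [coeff_T2, t_max_attained],
    ⟨⟨2 ^ (2 * ((k - 1) / 2) + 1) - 1, by omega, by rw [coeff_T2, t_min_attained]⟩, ?_⟩,
    by rw [coeff_T2, t_min_attained]⟩
  · rintro x ⟨n, hn, rfl⟩
    rw [coeff_T2]
    exact (t_bounds k hk n hn).2
  · rintro x ⟨n, hn, rfl⟩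
    rw [coeff_T2]
    exact (t_bounds k hk n hn).1
end
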